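/- Let Γ be a 3-edge connected metric graph with canonical model (G₀, l₀), and let D ∈ W¹₃(Γ) be a divisor of degree 3 and rank ≥ 1. Then for every vertex x ∈ V(G₀) there is a unique admissible representative of D with respect to x: a unique effective divisor D_x linearly equivalent to D of the form D_x = x + x₁ + x₂ with x₁, x₂ not both lying in the interior of the same edge of G₀. Moreover, any two distinct admissible representatives of D have disjoint supports. -/

import Mathlib

open scoped Classical

/-!
Combinatorial models of metric graphs: a finite (multi-)graph together with a
positive length for each edge.  A metric graph is determined by such a model;
its canonical model is the (unique) model with all valences at least `3`.
-/

structure MetricGraphModel : Type 1 where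
  V : Type
  E : Type
  fV : Fintype V
  fE : Fintype E
  dV : DecidableEq V
  dE : DecidableEq E
  src : E → V
  tgt : E → V
  len : E → ℝ
  len_pos : ∀ e, 0 < len e

attribute [instance] MetricGraphModel.fV MetricGraphModel.fE
attribute [instance] MetricGraphModel.dV MetricGraphModel.dE

namespace MetricGraphModel

/-- An edge is incident to a vertex. -/
def Incident (Γ : MetricGraphModel) (e : Γ.E) (v : Γ.V) : Prop :=
  Γ.src e = v ∨ Γ.tgt e = v

/-- Incidence multiplicity (a loop counts twice). -/
def incid (Γ : MetricGraphModel) (e : Γ.E) (v : Γ.V) : ℕ :=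
  (if Γ.src e = v then 1 else 0) + (if Γ.tgt e = v then 1 else 0)

/-- The valence of a vertex. -/
def valence (Γ : MetricGraphModel) (v : Γ.V) : ℕ := ∑ e : Γ.E, Γ.incid e v

def dSrc (Γ : MetricGraphModel) (x : Γ.E × Bool) : Γ.V :=
  if x.2 then Γ.src x.1 else Γ.tgt x.1

def dTgt (Γ : MetricGraphModel) (x : Γ.E × Bool) : Γ.V :=
  if x.2 then Γ.tgt x.1 else Γ.src x.1

/-- Walks, given as lists of oriented edges. -/
def IsWalk (Γ : MetricGraphModel) : List (Γ.E × Bool) → Γ.V → Γ.V → Prop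
  | [], u, v => u = v
  | x :: xs, u, v => Γ.dSrc x = u ∧ IsWalk Γ xs (Γ.dTgt x) v

def Connected (Γ : MetricGraphModel) : Prop :=
  Nonempty Γ.V ∧ ∀ u v : Γ.V, ∃ L, IsWalk Γ L u v

/-- Removing any set of at most `2` edges leaves the graph connected. -/
def ThreeEdgeConnected (Γ : MetricGraphModel) : Prop :=
  ∀ S : Finset Γ.E, S.card ≤ 2 → ∀ u v : Γ.V,
    ∃ L, IsWalk Γ L u v ∧ ∀ x ∈ L, x.1 ∉ S

def Loopless (Γ : MetricGraphModel) : Prop := ∀ e : Γ.E, Γ.src e ≠ Γ.tgt e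

/-- A canonical model: connected, with all valences at least `3`. -/
def IsCanonical (Γ : MetricGraphModel) : Prop :=
  Γ.Connected ∧ ∀ v : Γ.V, 3 ≤ Γ.valence v

/-- A (model of a) metric tree. -/
def IsTreeModel (Γ : MetricGraphModel) : Prop :=
  Γ.Connected ∧ Fintype.card Γ.E + 1 = Fintype.card Γ.V

/-- Points of the associated metric graph: vertices together with interior
points of edges (parametrised by their distance from the source). -/
abbrev Pt (Γ : MetricGraphModel) : Type :=
  Γ.V ⊕ Σ e : Γ.E, {t : ℝ // 0 < t ∧ t < Γ.len e}

end MetricGraphModel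

open MetricGraphModel

/-- The (canonical) loopless model: insert a vertex at the midpoint of every loop. -/
noncomputable def looplessModel (Γ : MetricGraphModel) : MetricGraphModel where
  V := Γ.V ⊕ {e : Γ.E // Γ.src e = Γ.tgt e}
  E := {e : Γ.E // Γ.src e ≠ Γ.tgt e} ⊕ ({e : Γ.E // Γ.src e = Γ.tgt e} × Bool)
  fV := inferInstance
  fE := inferInstance
  dV := inferInstance
  dE := inferInstance
  src := fun x => match x with
    | Sum.inl e => Sum.inl (Γ.src e.1)
    | Sum.inr p => Sum.inl (Γ.src p.1.1)
  tgt := fun x => match x with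
    | Sum.inl e => Sum.inl (Γ.tgt e.1)
    | Sum.inr p => Sum.inr p.1
  len := fun x => match x with
    | Sum.inl e => Γ.len e.1
    | Sum.inr p => Γ.len p.1.1 / 2
  len_pos := by
    rintro (e | p)
    · exact Γ.len_pos e.1
    · have h := Γ.len_pos p.1.1
      show 0 < Γ.len p.1.1 / 2
      linarith

/-- The metric subgraph obtained by removing all loops. -/
noncomputable def deloop (Γ : MetricGraphModel) : MetricGraphModel where
  V := Γ.V
  E := {e : Γ.E // Γ.src e ≠ Γ.tgt e}
  fV := inferInstance
  fE := inferInstance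
  dV := inferInstance
  dE := inferInstance
  src := fun e => Γ.src e.1
  tgt := fun e => Γ.tgt e.1
  len := fun e => Γ.len e.1
  len_pos := fun e => Γ.len_pos e.1

namespace MetricGraphModel

/-! ### Divisors and rational functions -/

abbrev Divisor (Γ : MetricGraphModel) : Type := Γ.Pt → ℤ

noncomputable def divDegree {Γ : MetricGraphModel} (D : Divisor Γ) : ℤ := finsum D

def DivEffective {Γ : MetricGraphModel} (D : Divisor Γ) : Prop := ∀ p, 0 ≤ D p

def DivFinSupp {Γ : MetricGraphModel} (D : Divisor Γ) : Prop :=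
  (Function.support D).Finite

noncomputable def unitDiv (Γ : MetricGraphModel) (p : Γ.Pt) : Divisor Γ :=
  fun q => if q = p then 1 else 0

/-- `f` is continuous piecewise linear with integer slopes on `[0, L]`. -/
def PLInt (f : ℝ → ℝ) (L : ℝ) : Prop :=
  ∃ n : ℕ, ∃ t : Fin (n + 1) → ℝ, t 0 = 0 ∧ t (Fin.last n) = L ∧ StrictMono t ∧
    ∀ i : Fin n, ∃ m : ℤ, ∀ s ∈ Set.Icc (t i.castSucc) (t i.succ),
      f s = f (t i.castSucc) + (m : ℝ) * (s - t i.castSucc)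

/-- The (integer) outgoing slope of `f` to the right of `t0`. -/
noncomputable def slopeR (f : ℝ → ℝ) (t0 : ℝ) : ℤ :=
  if h : ∃ m : ℤ, ∃ ε : ℝ, 0 < ε ∧ ∀ s ∈ Set.Icc t0 (t0 + ε),
      f s = f t0 + (m : ℝ) * (s - t0)
  then h.choose else 0

/-- The (integer) outgoing slope of `f` to the left of `t0`. -/
noncomputable def slopeL (f : ℝ → ℝ) (t0 : ℝ) : ℤ :=
  if h : ∃ m : ℤ, ∃ ε : ℝ, 0 < ε ∧ ∀ s ∈ Set.Icc (t0 - ε) t0,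
      f s = f t0 + (m : ℝ) * (t0 - s)
  then h.choose else 0

/-- A rational function: continuous, piecewise linear with integer slopes. -/
structure RationalFunction (Γ : MetricGraphModel) where
  vVal : Γ.V → ℝ
  eFun : Γ.E → ℝ → ℝ
  pl : ∀ e, PLInt (eFun e) (Γ.len e)
  srcVal : ∀ e, eFun e 0 = vVal (Γ.src e)
  tgtVal : ∀ e, eFun e (Γ.len e) = vVal (Γ.tgt e)

/-- The principal divisor of a rational function: the sum of the outgoing
slopes at every point. -/
noncomputable def ratDiv {Γ : MetricGraphModel} (f : RationalFunction Γ) : Divisor Γ :=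
  fun p => match p with
  | Sum.inl v => ∑ e : Γ.E,
      ((if Γ.src e = v then slopeR (f.eFun e) 0 else 0) +
       (if Γ.tgt e = v then slopeL (f.eFun e) (Γ.len e) else 0))
  | Sum.inr q => slopeR (f.eFun q.1) q.2.1 + slopeL (f.eFun q.1) q.2.1

/-- Evaluation of a rational function at a point of the metric graph. -/
def ratEval {Γ : MetricGraphModel} (f : RationalFunction Γ) : Γ.Pt → ℝ
  | Sum.inl v => f.vVal v
  | Sum.inr q => f.eFun q.1 q.2.1

/-- Linear equivalence of divisors. -/
def LinEquiv (Γ : MetricGraphModel) (D D' : Divisor Γ) : Prop :=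
  ∃ f : RationalFunction Γ, ∀ p, D p = D' p + ratDiv f p

/-- The Baker–Norine rank of `D` is at least `k`. -/
def RankGE (Γ : MetricGraphModel) (D : Divisor Γ) (k : ℕ) : Prop :=
  ∀ A : Divisor Γ, DivEffective A → DivFinSupp A → divDegree A = (k : ℤ) →
    ∃ B : Divisor Γ, DivEffective B ∧ DivFinSupp B ∧
      LinEquiv Γ (fun p => D p - A p) B

/-- `W¹₃(Γ) ≠ ∅`: some divisor of degree `3` has rank at least `1`. -/
def DivisoriallyTrigonal (Γ : MetricGraphModel) : Prop :=
  ∃ D : Divisor Γ, DivFinSupp D ∧ divDegree D = 3 ∧ RankGE Γ D 1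

end MetricGraphModel

/-! ### Harmonic morphisms of metric graphs -/

/-- An indexed morphism of metric graph models.  An edge is either mapped onto
an edge (with an integer stretching index `mu`) or contracted to a vertex. -/
structure MGMorphism (Γ Δ : MetricGraphModel) where
  vMap : Γ.V → Δ.V
  eMap : Γ.E → Δ.E ⊕ Δ.V
  mu : Γ.E → ℕ
  mu_zero : ∀ e, mu e = 0 ↔ ∃ v', eMap e = Sum.inr v'
  contract_ok : ∀ e v', eMap e = Sum.inr v' →
    vMap (Γ.src e) = v' ∧ vMap (Γ.tgt e) = v'
  edge_ok : ∀ e e', eMap e = Sum.inl e' →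
    ((vMap (Γ.src e) = Δ.src e' ∧ vMap (Γ.tgt e) = Δ.tgt e') ∨
     (vMap (Γ.src e) = Δ.tgt e' ∧ vMap (Γ.tgt e) = Δ.src e'))
  len_ok : ∀ e e', eMap e = Sum.inl e' → (mu e : ℝ) * Γ.len e = Δ.len e'

namespace MGMorphism

variable {Γ Δ : MetricGraphModel}

/-- The local sum `m_φ(v)` computed along a fixed edge `e'` at `φ(v)`. -/
noncomputable def locDeg (φ : MGMorphism Γ Δ) (v : Γ.V) (e' : Δ.E) : ℕ :=
  ∑ e : Γ.E, if φ.eMap e = Sum.inl e' then φ.mu e * Γ.incid e v else 0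

def Harmonic (φ : MGMorphism Γ Δ) : Prop :=
  ∀ (v : Γ.V) (e₁ e₂ : Δ.E),
    Δ.Incident e₁ (φ.vMap v) → Δ.Incident e₂ (φ.vMap v) →
      locDeg φ v e₁ = locDeg φ v e₂

def Nondegenerate (φ : MGMorphism Γ Δ) : Prop :=
  ∀ v : Γ.V, ∃ e' : Δ.E, Δ.Incident e' (φ.vMap v) ∧ 1 ≤ locDeg φ v e'

def HasDegree (φ : MGMorphism Γ Δ) (d : ℕ) : Prop :=
  ∀ e' : Δ.E, (∑ e : Γ.E, if φ.eMap e = Sum.inl e' then φ.mu e else 0) = d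

/-- The horizontal multiplicity `m_φ(v)` at a vertex. -/
noncomputable def mVal (φ : MGMorphism Γ Δ) (v : Γ.V) : ℕ :=
  (Finset.univ.filter fun e' : Δ.E => Δ.Incident e' (φ.vMap v)).sup (locDeg φ v)

end MGMorphism

/-! ### Isomorphisms, subdivisions and tropical modifications -/

def sameEndsMap (Γ Δ : MetricGraphModel) (f : Γ.V → Δ.V) (e : Γ.E) (e' : Δ.E) : Prop :=
  (f (Γ.src e) = Δ.src e' ∧ f (Γ.tgt e) = Δ.tgt e') ∨
  (f (Γ.src e) = Δ.tgt e' ∧ f (Γ.tgt e) = Δ.src e')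

structure MGMIso (Γ Δ : MetricGraphModel) where
  vEquiv : Γ.V ≃ Δ.V
  eEquiv : Γ.E ≃ Δ.E
  ends : ∀ e, sameEndsMap Γ Δ (fun v => vEquiv v) e (eEquiv e)
  len_eq : ∀ e, Δ.len (eEquiv e) = Γ.len e

/-- Deletion of a leaf (a valence-one vertex together with its edge). -/
def LeafDeletion (Δ Δ' : MetricGraphModel) : Prop :=
  ∃ (v₀ : Δ.V) (e₀ : Δ.E), Δ.valence v₀ = 1 ∧ Δ.Incident e₀ v₀ ∧
    ∃ (fv : Δ'.V ≃ {v : Δ.V // v ≠ v₀}) (fe : Δ'.E ≃ {e : Δ.E // e ≠ e₀}),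
      (∀ e : Δ'.E, sameEndsMap Δ' Δ (fun v => (fv v).1) e (fe e).1) ∧
      ∀ e : Δ'.E, Δ.len (fe e).1 = Δ'.len e

/-- Suppression of a valence-two vertex, merging its two edges and adding
their lengths. -/
def SeriesReduction (Δ Δ' : MetricGraphModel) : Prop :=
  ∃ (v₀ : Δ.V) (e₁ e₂ : Δ.E) (u₁ u₂ : Δ.V),
    e₁ ≠ e₂ ∧ Δ.valence v₀ = 2 ∧ u₁ ≠ v₀ ∧ u₂ ≠ v₀ ∧
    ({Δ.src e₁, Δ.tgt e₁} : Set Δ.V) = {v₀, u₁} ∧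
    ({Δ.src e₂, Δ.tgt e₂} : Set Δ.V) = {v₀, u₂} ∧
    ∃ (fv : Δ'.V ≃ {v : Δ.V // v ≠ v₀}) (ebar : Δ'.E)
      (fe : {e : Δ'.E // e ≠ ebar} ≃ {e : Δ.E // e ≠ e₁ ∧ e ≠ e₂}),
      Δ'.len ebar = Δ.len e₁ + Δ.len e₂ ∧
      ({(fv (Δ'.src ebar)).1, (fv (Δ'.tgt ebar)).1} : Set Δ.V) = {u₁, u₂} ∧
      (∀ e : {e : Δ'.E // e ≠ ebar},
        sameEndsMap Δ' Δ (fun v => (fv v).1) e.1 (fe e).1) ∧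
      ∀ e : {e : Δ'.E // e ≠ ebar}, Δ.len (fe e).1 = Δ'.len e.1

def ReductionStep (Δ Δ' : MetricGraphModel) : Prop :=
  LeafDeletion Δ Δ' ∨ SeriesReduction Δ Δ' ∨ Nonempty (MGMIso Δ Δ')

/-- `Δ` reduces to `Γ` by deleting leaves and suppressing valence-two
vertices.  When `Γ` is a canonical model, this says exactly that the metric
graph of `Δ` is a tropical modification of the metric graph of `Γ`. -/
def Reduces (Δ Γ : MetricGraphModel) : Prop :=
  Relation.ReflTransGen ReductionStep Δ Γ

def IsTropicalModificationOf (Δ Γ : MetricGraphModel) : Prop := Reduces Δ Γ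

def ModelStep (Δ Δ' : MetricGraphModel) : Prop :=
  SeriesReduction Δ Δ' ∨ Nonempty (MGMIso Δ Δ')

/-- `Δ` and `Γ` are models of the same metric graph (no trees added). -/
def SameMetricGraph (Δ Γ : MetricGraphModel) : Prop :=
  Relation.ReflTransGen ModelStep Δ Γ

/-- `Γ` is trigonal: a tropical modification of `Γ` admits a non-degenerate
harmonic morphism of degree `3` onto a metric tree. -/
def Trigonal (Γ : MetricGraphModel) : Prop :=
  ∃ Δ T : MetricGraphModel, IsTropicalModificationOf Δ Γ ∧ T.IsTreeModel ∧
    ∃ φ : MGMorphism Δ T,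
      MGMorphism.Harmonic φ ∧ MGMorphism.Nondegenerate φ ∧ MGMorphism.HasDegree φ 3

/-- `Γ` is strictly trigonal: `Γ` itself (i.e. some model of the same metric
graph) admits a non-degenerate harmonic morphism of degree `3` onto a metric
tree. -/
def StrictlyTrigonal (Γ : MetricGraphModel) : Prop :=
  ∃ Δ T : MetricGraphModel, SameMetricGraph Δ Γ ∧ T.IsTreeModel ∧
    ∃ φ : MGMorphism Δ T,
      MGMorphism.Harmonic φ ∧ MGMorphism.Nondegenerate φ ∧ MGMorphism.HasDegree φ 3

/-! ### Embeddings up to subdivision (for tropical modifications of morphisms) -/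

structure SubEmbed (G Δ : MetricGraphModel) where
  v : G.V → Δ.V
  inj : Function.Injective v
  path : G.E → List (Δ.E × Bool)
  ne : ∀ e, path e ≠ []
  walk : ∀ e, MetricGraphModel.IsWalk Δ (path e) (v (G.src e)) (v (G.tgt e))
  len_sum : ∀ e, ((path e).map fun x => Δ.len x.1).sum = G.len e

/-! ### Pullback of points along a harmonic morphism -/

/-- `φ` maps the point `p` of `Γ` to the point `t` of `Δ`. -/
def MapsToPt {Γ Δ : MetricGraphModel} (φ : MGMorphism Γ Δ) : Γ.Pt → Δ.Pt → Prop
  | Sum.inl v, Sum.inl t => φ.vMap v = t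
  | Sum.inl _, Sum.inr _ => False
  | Sum.inr q, Sum.inl t => φ.eMap q.1 = Sum.inr t
  | Sum.inr q, Sum.inr r =>
      φ.eMap q.1 = Sum.inl r.1 ∧
      ((φ.vMap (Γ.src q.1) = Δ.src r.1 ∧ (r.2.1 : ℝ) = (φ.mu q.1 : ℝ) * (q.2.1 : ℝ)) ∨
       (φ.vMap (Γ.src q.1) = Δ.tgt r.1 ∧
         (r.2.1 : ℝ) = Δ.len r.1 - (φ.mu q.1 : ℝ) * (q.2.1 : ℝ)))

/-- Horizontal multiplicity of a point. -/
noncomputable def hmult {Γ Δ : MetricGraphModel} (φ : MGMorphism Γ Δ) : Γ.Pt → ℕ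
  | Sum.inl v => MGMorphism.mVal φ v
  | Sum.inr q => φ.mu q.1

/-- The pullback divisor `φ*(t)` of a point `t`. -/
noncomputable def pullbackDiv {Γ Δ : MetricGraphModel} (φ : MGMorphism Γ Δ)
    (t : Δ.Pt) : MetricGraphModel.Divisor Γ :=
  fun p => if MapsToPt φ p t then (hmult φ p : ℤ) else 0

/-! ### Points on edges, admissible representatives, consecutive divisors -/

open MetricGraphModel

/-- `p` is an interior point of the edge `e`. -/
def interiorOf (Γ : MetricGraphModel) (e : Γ.E) (p : Γ.Pt) : Prop :=
  ∃ q : {t : ℝ // 0 < t ∧ t < Γ.len e}, p = Sum.inr ⟨e, q⟩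

def SameEdgeInterior (Γ : MetricGraphModel) (p q : Γ.Pt) : Prop :=
  ∃ e : Γ.E, interiorOf Γ e p ∧ interiorOf Γ e q

/-- `Dx` is the admissible representative of `D` with respect to the vertex
`x`: it is linearly equivalent to `D`, of the form `x + x₁ + x₂`, and `x₁, x₂`
do not both lie in the interior of one edge. -/
def AdmissibleRep (Γ : MetricGraphModel) (D : Divisor Γ) (x : Γ.V)
    (Dx : Divisor Γ) : Prop :=
  LinEquiv Γ D Dx ∧
  ∃ p q : Γ.Pt,
    Dx = (fun z => unitDiv Γ (Sum.inl x) z + unitDiv Γ p z + unitDiv Γ q z) ∧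
    ¬ SameEdgeInterior Γ p q

/-- `p` lies on the (closed) edge `e` at distance `s` from its source. -/
def LiesOn (Γ : MetricGraphModel) (e : Γ.E) (p : Γ.Pt) (s : ℝ) : Prop :=
  (p = Sum.inl (Γ.src e) ∧ s = 0) ∨ (p = Sum.inl (Γ.tgt e) ∧ s = Γ.len e) ∨
  (∃ h : 0 < s ∧ s < Γ.len e, p = Sum.inr ⟨e, ⟨s, h⟩⟩)

/-- Vertices of the refinement `G_D`: vertices of `G₀` together with all
support points of admissible representatives of `D`. -/
def SpecialPt (Γ : MetricGraphModel) (D : Divisor Γ) (p : Γ.Pt) : Prop :=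
  (∃ v : Γ.V, p = Sum.inl v) ∨
  ∃ (x : Γ.V) (Dx : Divisor Γ), AdmissibleRep Γ D x Dx ∧ Dx p ≠ 0

/-- An edge of the refinement `G_D` joining the supports of `Dx` and `Dy`:
a segment of an edge of `Γ` between a point of `Supp Dx` and a point of
`Supp Dy` containing no vertex of `G_D` in its interior. -/
def ConnSeg (Γ : MetricGraphModel) (D Dx Dy : Divisor Γ) (e : Γ.E) (s t : ℝ) : Prop :=
  s < t ∧ ∃ p q : Γ.Pt, LiesOn Γ e p s ∧ LiesOn Γ e q t ∧
    ((Dx p ≠ 0 ∧ Dy q ≠ 0) ∨ (Dy p ≠ 0 ∧ Dx q ≠ 0)) ∧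
    ∀ r, s < r → r < t → ∀ z, LiesOn Γ e z r → ¬ SpecialPt Γ D z

/-- Two admissible representatives are consecutive. -/
def Consecutive (Γ : MetricGraphModel) (D Dx Dy : Divisor Γ) : Prop :=
  Dx ≠ Dy ∧ ∃ e s t, ConnSeg Γ D Dx Dy e s t

/-- The open segment of `e` between parameters `s` and `t`, as a set of points. -/
def segSet (Γ : MetricGraphModel) (e : Γ.E) (s t : ℝ) : Set Γ.Pt :=
  {z | ∃ r, s < r ∧ r < t ∧ LiesOn Γ e z r}

/-- Two points can be joined inside one edge avoiding the removed set `R`. -/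
def AvoidAdj (Γ : MetricGraphModel) (R : Set Γ.Pt) (p q : Γ.Pt) : Prop :=
  ∃ (e : Γ.E) (s t : ℝ), s ≤ t ∧
    ((LiesOn Γ e p s ∧ LiesOn Γ e q t) ∨ (LiesOn Γ e q s ∧ LiesOn Γ e p t)) ∧
    ∀ r, s < r → r < t → ∀ z, LiesOn Γ e z r → z ∉ R

/-- The complement of `R` in the metric graph is connected. -/
def ComplementConnected (Γ : MetricGraphModel) (R : Set Γ.Pt) : Prop :=
  ∀ p q : Γ.Pt, p ∉ R → q ∉ R →
    Relation.ReflTransGen (fun a b => a ∉ R ∧ b ∉ R ∧ AvoidAdj Γ R a b) p q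

/-! ### Minimizing/maximizing sets of a rational function -/

def minSet {Γ : MetricGraphModel} (f : RationalFunction Γ) : Set Γ.Pt :=
  {p | ∀ q, ratEval f p ≤ ratEval f q}

def maxSet {Γ : MetricGraphModel} (f : RationalFunction Γ) : Set Γ.Pt :=
  {p | ∀ q, ratEval f q ≤ ratEval f p}

/-- `p` is a boundary point of `A`: it belongs to `A` and there are points of
the complement arbitrarily close to it along some edge. -/
def InBoundary (Γ : MetricGraphModel) (A : Set Γ.Pt) (p : Γ.Pt) : Prop :=
  p ∈ A ∧ ∃ (e : Γ.E) (s : ℝ), LiesOn Γ e p s ∧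
    ∀ ε : ℝ, 0 < ε → ∃ r z, |r - s| < ε ∧ LiesOn Γ e z r ∧ z ∉ A

/-- There is an edge leaving `A` at `p`, in the direction of `e` at parameter
`s` (increasing if `b = true`, decreasing if `b = false`). -/
def ExitsAt (Γ : MetricGraphModel) (A : Set Γ.Pt) (p : Γ.Pt) (e : Γ.E)
    (s : ℝ) (b : Bool) : Prop :=
  LiesOn Γ e p s ∧
  (b = true → ∃ ε : ℝ, 0 < ε ∧ s + ε ≤ Γ.len e ∧
    ∀ r, s < r → r < s + ε → ∀ z, LiesOn Γ e z r → z ∉ A) ∧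
  (b = false → ∃ ε : ℝ, 0 < ε ∧ 0 ≤ s - ε ∧
    ∀ r, s - ε < r → r < s → ∀ z, LiesOn Γ e z r → z ∉ A)


/-! ### Auxiliary development for Statement 6 -/

namespace AdmAux

open MetricGraphModel

/-- Right local linearity of `f` at `t0` with integer slope `m`. -/
def RLin (f : ℝ → ℝ) (t0 : ℝ) (m : ℤ) : Prop :=
  ∃ ε : ℝ, 0 < ε ∧ ∀ s ∈ Set.Icc t0 (t0 + ε), f s = f t0 + (m : ℝ) * (s - t0)

/-- Left local linearity of `f` at `t0` with integer outgoing slope `m`. -/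
def LLin (f : ℝ → ℝ) (t0 : ℝ) (m : ℤ) : Prop :=
  ∃ ε : ℝ, 0 < ε ∧ ∀ s ∈ Set.Icc (t0 - ε) t0, f s = f t0 + (m : ℝ) * (t0 - s)

lemma RLin.unique {f : ℝ → ℝ} {t0 : ℝ} {m m' : ℤ} (h : RLin f t0 m) (h' : RLin f t0 m') :
    m = m' := by
  obtain ⟨ε, hε, he⟩ := h
  obtain ⟨ε', hε', he'⟩ := h'
  have hδ : 0 < min ε ε' := lt_min hε hε'
  have h1 := he (t0 + min ε ε') ⟨by linarith, by simp [min_le_left]⟩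
  have h2 := he' (t0 + min ε ε') ⟨by linarith, by simp [min_le_right]⟩
  have h3 : (m : ℝ) * (min ε ε') = (m' : ℝ) * (min ε ε') := by
    have : t0 + min ε ε' - t0 = min ε ε' := by ring
    rw [this] at h1 h2; linarith
  have h4 : (m : ℝ) = m' := mul_right_cancel₀ (ne_of_gt hδ) h3
  exact_mod_cast h4

lemma LLin.unique {f : ℝ → ℝ} {t0 : ℝ} {m m' : ℤ} (h : LLin f t0 m) (h' : LLin f t0 m') :
    m = m' := by
  obtain ⟨ε, hε, he⟩ := h
  obtain ⟨ε', hε', he'⟩ := h'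
  have hδ : 0 < min ε ε' := lt_min hε hε'
  have h1 := he (t0 - min ε ε') ⟨by have := min_le_left ε ε'; linarith, by linarith⟩
  have h2 := he' (t0 - min ε ε') ⟨by have := min_le_right ε ε'; linarith, by linarith⟩
  have h3 : (m : ℝ) * (min ε ε') = (m' : ℝ) * (min ε ε') := by
    have : t0 - (t0 - min ε ε') = min ε ε' := by ring
    rw [this] at h1 h2; linarith
  have h4 : (m : ℝ) = m' := mul_right_cancel₀ (ne_of_gt hδ) h3
  exact_mod_cast h4

lemma slopeR_eq {f : ℝ → ℝ} {t0 : ℝ} {m : ℤ} (h : RLin f t0 m) : slopeR f t0 = m := by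
  have hex : ∃ m : ℤ, ∃ ε : ℝ, 0 < ε ∧ ∀ s ∈ Set.Icc t0 (t0 + ε),
      f s = f t0 + (m : ℝ) * (s - t0) := ⟨m, h⟩
  rw [slopeR, dif_pos hex]
  exact RLin.unique hex.choose_spec h

lemma slopeL_eq {f : ℝ → ℝ} {t0 : ℝ} {m : ℤ} (h : LLin f t0 m) : slopeL f t0 = m := by
  have hex : ∃ m : ℤ, ∃ ε : ℝ, 0 < ε ∧ ∀ s ∈ Set.Icc (t0 - ε) t0,
      f s = f t0 + (m : ℝ) * (t0 - s) := ⟨m, h⟩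
  rw [slopeL, dif_pos hex]
  exact LLin.unique hex.choose_spec h

lemma RLin.nonneg {f : ℝ → ℝ} {t0 U : ℝ} {m : ℤ} (h : RLin f t0 m) (hU : t0 < U)
    (hge : ∀ s, t0 ≤ s → s ≤ U → f t0 ≤ f s) : 0 ≤ m := by
  obtain ⟨ε, hε, he⟩ := h
  have hδ : 0 < min ε (U - t0) := lt_min hε (by linarith)
  have h1 := he (t0 + min ε (U - t0)) ⟨by linarith, by have := min_le_left ε (U - t0); linarith⟩
  have h2 := hge (t0 + min ε (U - t0)) (by linarith)
    (by have := min_le_right ε (U - t0); linarith)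
  have h3 : 0 ≤ (m : ℝ) * (min ε (U - t0)) := by
    have : t0 + min ε (U - t0) - t0 = min ε (U - t0) := by ring
    rw [this] at h1; linarith
  have : (0 : ℝ) ≤ m := by nlinarith
  exact_mod_cast this

lemma LLin.nonneg {f : ℝ → ℝ} {t0 U : ℝ} {m : ℤ} (h : LLin f t0 m) (hU : U < t0)
    (hge : ∀ s, U ≤ s → s ≤ t0 → f t0 ≤ f s) : 0 ≤ m := by
  obtain ⟨ε, hε, he⟩ := h
  have hδ : 0 < min ε (t0 - U) := lt_min hε (by linarith)
  have h1 := he (t0 - min ε (t0 - U)) ⟨by have := min_le_left ε (t0 - U); linarith, by linarith⟩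
  have h2 := hge (t0 - min ε (t0 - U))
    (by have := min_le_right ε (t0 - U); linarith) (by linarith)
  have h3 : 0 ≤ (m : ℝ) * (min ε (t0 - U)) := by
    have : t0 - (t0 - min ε (t0 - U)) = min ε (t0 - U) := by ring
    rw [this] at h1; linarith
  have : (0 : ℝ) ≤ m := by nlinarith
  exact_mod_cast this

lemma RLin_of_affine {F : ℝ → ℝ} {α β c : ℝ} {m : ℤ} (hc : α ≤ c) (hcβ : c < β)
    (hf : ∀ s ∈ Set.Icc α β, F s = F α + (m : ℝ) * (s - α)) : RLin F c m := by
  refine ⟨β - c, by linarith, fun s hs => ?_⟩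
  have hs1 : α ≤ s := by have := hs.1; linarith
  have hs2 : s ≤ β := by have := hs.2; linarith
  have h1 := hf s ⟨hs1, hs2⟩
  have h2 := hf c ⟨hc, le_of_lt hcβ⟩
  rw [h1, h2]; ring

lemma LLin_of_affine {F : ℝ → ℝ} {α β c : ℝ} {m : ℤ} (hc : α < c) (hcβ : c ≤ β)
    (hf : ∀ s ∈ Set.Icc α β, F s = F α + (m : ℝ) * (s - α)) : LLin F c (-m) := by
  refine ⟨c - α, by linarith, fun s hs => ?_⟩
  have hs1 : α ≤ s := by have := hs.1; linarith
  have hs2 : s ≤ β := by have := hs.2; linarith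
  have h1 := hf s ⟨hs1, hs2⟩
  have h2 := hf c ⟨le_of_lt hc, hcβ⟩
  rw [h1, h2]; push_cast; ring

lemma locate {n : ℕ} {t : Fin (n + 1) → ℝ} (ht : StrictMono t) {x : ℝ}
    (h0 : t 0 ≤ x) (h1 : x < t (Fin.last n)) :
    ∃ i : Fin n, t i.castSucc ≤ x ∧ x < t i.succ := by
  classical
  set Sf := Finset.univ.filter (fun j : Fin (n + 1) => t j ≤ x) with hSf
  have hSne : Sf.Nonempty := ⟨0, by simp [hSf, h0]⟩
  set j := Sf.max' hSne with hj
  have hjmem : j ∈ Sf := Sf.max'_mem hSne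
  have hjx : t j ≤ x := by
    have := hjmem; rw [hSf, Finset.mem_filter] at this; exact this.2
  have hjne : j ≠ Fin.last n := by
    intro h; rw [h] at hjx; linarith
  have hjlt : (j : ℕ) < n := by
    have := Fin.val_lt_last hjne; simpa using this
  refine ⟨⟨(j : ℕ), hjlt⟩, ?_, ?_⟩
  · have : (⟨(j : ℕ), hjlt⟩ : Fin n).castSucc = j := by
      apply Fin.ext; simp
    rw [this]; exact hjx
  · by_contra hcon
    push_neg at hcon
    have hmem : (⟨(j : ℕ), hjlt⟩ : Fin n).succ ∈ Sf := by
      rw [hSf, Finset.mem_filter]; exact ⟨Finset.mem_univ _, hcon⟩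
    have hle := Sf.le_max' _ hmem
    rw [← hj] at hle
    have : (j : ℕ) + 1 ≤ (j : ℕ) := by
      have := (Fin.le_def).mp hle; simpa using this
    omega

lemma locateL {n : ℕ} {t : Fin (n + 1) → ℝ} (ht : StrictMono t) {x : ℝ}
    (h0 : t 0 < x) (h1 : x ≤ t (Fin.last n)) :
    ∃ i : Fin n, t i.castSucc < x ∧ x ≤ t i.succ := by
  classical
  set Sf := Finset.univ.filter (fun j : Fin (n + 1) => x ≤ t j) with hSf
  have hSne : Sf.Nonempty := ⟨Fin.last n, by simp [hSf, h1]⟩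
  set j := Sf.min' hSne with hj
  have hjmem : j ∈ Sf := Sf.min'_mem hSne
  have hjx : x ≤ t j := by
    have := hjmem; rw [hSf, Finset.mem_filter] at this; exact this.2
  have hjne : j ≠ 0 := by
    intro h; rw [h] at hjx; linarith
  have hjpos : 0 < (j : ℕ) := by
    rcases Nat.eq_zero_or_pos (j : ℕ) with h | h
    · exact absurd (Fin.ext h) hjne
    · exact h
  have hjlt : (j : ℕ) - 1 < n := by
    have := j.isLt; omega
  refine ⟨⟨(j : ℕ) - 1, hjlt⟩, ?_, ?_⟩
  · by_contra hcon
    push_neg at hcon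
    have hmem : (⟨(j : ℕ) - 1, hjlt⟩ : Fin n).castSucc ∈ Sf := by
      rw [hSf, Finset.mem_filter]; exact ⟨Finset.mem_univ _, hcon⟩
    have hle := Sf.min'_le _ hmem
    rw [← hj] at hle
    have : (j : ℕ) ≤ (j : ℕ) - 1 := by
      have := (Fin.le_def).mp hle; simpa using this
    omega
  · have : (⟨(j : ℕ) - 1, hjlt⟩ : Fin n).succ = j := by
      apply Fin.ext; simp; omega
    rw [this]; exact hjx

lemma exists_RLin {F : ℝ → ℝ} {L : ℝ} (h : PLInt F L) {s : ℝ}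
    (h0 : 0 ≤ s) (h1 : s < L) : ∃ m : ℤ, RLin F s m := by
  obtain ⟨n, t, ht0, htL, hmono, hlin⟩ := h
  obtain ⟨i, hi1, hi2⟩ := locate hmono (x := s) (by rw [ht0]; exact h0) (by rw [htL]; exact h1)
  obtain ⟨m, hm⟩ := hlin i
  exact ⟨m, RLin_of_affine hi1 hi2 hm⟩

lemma exists_LLin {F : ℝ → ℝ} {L : ℝ} (h : PLInt F L) {s : ℝ}
    (h0 : 0 < s) (h1 : s ≤ L) : ∃ m : ℤ, LLin F s m := by
  obtain ⟨n, t, ht0, htL, hmono, hlin⟩ := h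
  obtain ⟨i, hi1, hi2⟩ := locateL hmono (x := s) (by rw [ht0]; exact h0) (by rw [htL]; exact h1)
  obtain ⟨m, hm⟩ := hlin i
  exact ⟨-m, LLin_of_affine hi1 hi2 hm⟩


section Comb

lemma RLin.add {F G : ℝ → ℝ} {c : ℝ} {m1 m2 : ℤ} (h1 : RLin F c m1) (h2 : RLin G c m2) :
    RLin (fun s => F s + G s) c (m1 + m2) := by
  obtain ⟨ε1, hε1, he1⟩ := h1
  obtain ⟨ε2, hε2, he2⟩ := h2
  refine ⟨min ε1 ε2, lt_min hε1 hε2, fun s hs => ?_⟩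
  have hs1 : s ∈ Set.Icc c (c + ε1) :=
    ⟨hs.1, by have := hs.2; have := min_le_left ε1 ε2; linarith⟩
  have hs2 : s ∈ Set.Icc c (c + ε2) :=
    ⟨hs.1, by have := hs.2; have := min_le_right ε1 ε2; linarith⟩
  show F s + G s = F c + G c + ((m1 + m2 : ℤ) : ℝ) * (s - c)
  push_cast; linarith [he1 s hs1, he2 s hs2]

lemma RLin.sub' {F G : ℝ → ℝ} {c : ℝ} {m1 m2 : ℤ} (h1 : RLin F c m1) (h2 : RLin G c m2) :
    RLin (fun s => F s - G s) c (m1 - m2) := by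
  obtain ⟨ε1, hε1, he1⟩ := h1
  obtain ⟨ε2, hε2, he2⟩ := h2
  refine ⟨min ε1 ε2, lt_min hε1 hε2, fun s hs => ?_⟩
  have hs1 : s ∈ Set.Icc c (c + ε1) :=
    ⟨hs.1, by have := hs.2; have := min_le_left ε1 ε2; linarith⟩
  have hs2 : s ∈ Set.Icc c (c + ε2) :=
    ⟨hs.1, by have := hs.2; have := min_le_right ε1 ε2; linarith⟩
  show F s - G s = F c - G c + ((m1 - m2 : ℤ) : ℝ) * (s - c)
  push_cast; linarith [he1 s hs1, he2 s hs2]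

lemma LLin.add {F G : ℝ → ℝ} {c : ℝ} {m1 m2 : ℤ} (h1 : LLin F c m1) (h2 : LLin G c m2) :
    LLin (fun s => F s + G s) c (m1 + m2) := by
  obtain ⟨ε1, hε1, he1⟩ := h1
  obtain ⟨ε2, hε2, he2⟩ := h2
  refine ⟨min ε1 ε2, lt_min hε1 hε2, fun s hs => ?_⟩
  have hs1 : s ∈ Set.Icc (c - ε1) c :=
    ⟨by have := hs.1; have := min_le_left ε1 ε2; linarith, hs.2⟩
  have hs2 : s ∈ Set.Icc (c - ε2) c :=
    ⟨by have := hs.1; have := min_le_right ε1 ε2; linarith, hs.2⟩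
  show F s + G s = F c + G c + ((m1 + m2 : ℤ) : ℝ) * (c - s)
  push_cast; linarith [he1 s hs1, he2 s hs2]

lemma LLin.sub' {F G : ℝ → ℝ} {c : ℝ} {m1 m2 : ℤ} (h1 : LLin F c m1) (h2 : LLin G c m2) :
    LLin (fun s => F s - G s) c (m1 - m2) := by
  obtain ⟨ε1, hε1, he1⟩ := h1
  obtain ⟨ε2, hε2, he2⟩ := h2
  refine ⟨min ε1 ε2, lt_min hε1 hε2, fun s hs => ?_⟩
  have hs1 : s ∈ Set.Icc (c - ε1) c :=
    ⟨by have := hs.1; have := min_le_left ε1 ε2; linarith, hs.2⟩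
  have hs2 : s ∈ Set.Icc (c - ε2) c :=
    ⟨by have := hs.1; have := min_le_right ε1 ε2; linarith, hs.2⟩
  show F s - G s = F c - G c + ((m1 - m2 : ℤ) : ℝ) * (c - s)
  push_cast; linarith [he1 s hs1, he2 s hs2]

lemma PLInt_comb {F G : ℝ → ℝ} {L : ℝ} (hF : PLInt F L) (hG : PLInt G L) (a b : ℤ) :
    PLInt (fun s => (a : ℝ) * F s + (b : ℝ) * G s) L := by
  classical
  obtain ⟨n1, t1, h10, h1L, hm1, hl1⟩ := hF
  obtain ⟨n2, t2, h20, h2L, hm2, hl2⟩ := hG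
  set T : Finset ℝ := (Finset.univ.image t1) ∪ (Finset.univ.image t2) with hT
  have h0T : (0 : ℝ) ∈ T := by
    rw [hT, Finset.mem_union]; left
    exact Finset.mem_image.mpr ⟨0, Finset.mem_univ _, h10⟩
  have hLT : L ∈ T := by
    rw [hT, Finset.mem_union]; left
    exact Finset.mem_image.mpr ⟨Fin.last n1, Finset.mem_univ _, h1L⟩
  have hbounds : ∀ x ∈ T, 0 ≤ x ∧ x ≤ L := by
    intro x hx
    rw [hT, Finset.mem_union] at hx
    rcases hx with hx | hx <;> obtain ⟨i, _, rfl⟩ := Finset.mem_image.mp hx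
    · constructor
      · rw [← h10]; exact hm1.monotone (Fin.zero_le i)
      · rw [← h1L]; exact hm1.monotone (Fin.le_last i)
    · constructor
      · rw [← h20]; exact hm2.monotone (Fin.zero_le i)
      · rw [← h2L]; exact hm2.monotone (Fin.le_last i)
  have hkpos : 0 < T.card := Finset.card_pos.mpr ⟨0, h0T⟩
  set n' := T.card - 1 with hn'
  have hkk : n' + 1 = T.card := by omega
  set σ := T.orderIsoOfFin rfl with hσ
  set τ : Fin (n' + 1) → ℝ := fun i => (σ (Fin.cast hkk i) : ℝ) with hτ
  have hτmono : StrictMono τ := by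
    intro i j hij
    have : Fin.cast hkk i < Fin.cast hkk j := by
      rw [Fin.lt_def] at hij ⊢; simpa using hij
    exact_mod_cast σ.strictMono this
  have hτmem : ∀ i, τ i ∈ T := fun i => (σ (Fin.cast hkk i)).2
  have hτsurj : ∀ x ∈ T, ∃ i, τ i = x := by
    intro x hx
    refine ⟨Fin.cast hkk.symm (σ.symm ⟨x, hx⟩), ?_⟩
    rw [hτ]; simp
  have hτ0 : τ 0 = 0 := by
    obtain ⟨i, hi⟩ := hτsurj 0 h0T
    have h1 : τ 0 ≤ τ i := hτmono.monotone (Fin.zero_le i)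
    have h2 : 0 ≤ τ 0 := (hbounds _ (hτmem 0)).1
    rw [hi] at h1; linarith
  have hτL : τ (Fin.last n') = L := by
    obtain ⟨i, hi⟩ := hτsurj L hLT
    have h1 : τ i ≤ τ (Fin.last n') := hτmono.monotone (Fin.le_last i)
    have h2 : τ (Fin.last n') ≤ L := (hbounds _ (hτmem _)).2
    rw [hi] at h1; linarith
  have hnoin : ∀ (j : Fin n') (x), x ∈ T → τ j.castSucc < x → x < τ j.succ → False := by
    intro j x hx h1 h2
    obtain ⟨i, rfl⟩ := hτsurj x hx
    have hji : j.castSucc < i := hτmono.lt_iff_lt.mp h1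
    have hij : i < j.succ := hτmono.lt_iff_lt.mp h2
    rw [Fin.lt_def] at hji hij
    simp [Fin.val_succ] at hji hij; omega
  refine ⟨n', τ, hτ0, hτL, hτmono, fun j => ?_⟩
  set c := τ j.castSucc with hc
  set d := τ j.succ with hd
  have hcd : c < d := hτmono (Fin.castSucc_lt_succ : j.castSucc < j.succ)
  have hc0 : 0 ≤ c := (hbounds _ (hτmem _)).1
  have hdL : d ≤ L := (hbounds _ (hτmem _)).2
  have hcL : c < L := lt_of_lt_of_le hcd hdL
  -- find the piece of F containing [c, d]
  obtain ⟨i1, hi11, hi12⟩ := locate hm1 (x := c) (by rw [h10]; exact hc0) (by rw [h1L]; exact hcL)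
  obtain ⟨mu, hmu⟩ := hl1 i1
  have hd1 : d ≤ t1 i1.succ := by
    by_contra hcon
    push_neg at hcon
    have hmem : t1 i1.succ ∈ T := by
      rw [hT, Finset.mem_union]
      exact Or.inl (Finset.mem_image.mpr ⟨_, Finset.mem_univ _, rfl⟩)
    exact hnoin j (t1 i1.succ) hmem hi12 hcon
  obtain ⟨i2, hi21, hi22⟩ := locate hm2 (x := c) (by rw [h20]; exact hc0) (by rw [h2L]; exact hcL)
  obtain ⟨nu, hnu⟩ := hl2 i2
  have hd2 : d ≤ t2 i2.succ := by
    by_contra hcon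
    push_neg at hcon
    have hmem : t2 i2.succ ∈ T := by
      rw [hT, Finset.mem_union]
      exact Or.inr (Finset.mem_image.mpr ⟨_, Finset.mem_univ _, rfl⟩)
    exact hnoin j (t2 i2.succ) hmem hi22 hcon
  refine ⟨a * mu + b * nu, fun s hs => ?_⟩
  have hsF : F s = F c + (mu : ℝ) * (s - c) := by
    have h1 := hmu s ⟨le_trans hi11 hs.1, le_trans hs.2 hd1⟩
    have h2 := hmu c ⟨hi11, le_trans (le_of_lt hcd) hd1⟩
    rw [h1, h2]; ring
  have hsG : G s = G c + (nu : ℝ) * (s - c) := by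
    have h1 := hnu s ⟨le_trans hi21 hs.1, le_trans hs.2 hd2⟩
    have h2 := hnu c ⟨hi21, le_trans (le_of_lt hcd) hd2⟩
    rw [h1, h2]; ring
  show (a : ℝ) * F s + (b : ℝ) * G s = (a : ℝ) * F c + (b : ℝ) * G c + ((a * mu + b * nu : ℤ) : ℝ) * (s - c)
  rw [hsF, hsG]; push_cast; ring

lemma PLInt_add {F G : ℝ → ℝ} {L : ℝ} (hF : PLInt F L) (hG : PLInt G L) :
    PLInt (fun s => F s + G s) L := by
  have := PLInt_comb hF hG 1 1
  simpa using this

lemma PLInt_sub {F G : ℝ → ℝ} {L : ℝ} (hF : PLInt F L) (hG : PLInt G L) :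
    PLInt (fun s => F s - G s) L := by
  have := PLInt_comb hF hG 1 (-1)
  have heq : (fun s => ((1 : ℤ) : ℝ) * F s + ((-1 : ℤ) : ℝ) * G s) = fun s => F s - G s := by
    funext s; push_cast; ring
  rwa [heq] at this

end Comb


section Scan

lemma scanR {F : ℝ → ℝ} {L m : ℝ} (hpl : PLInt F L)
    (hge : ∀ s, 0 ≤ s → s ≤ L → m ≤ F s) {a : ℝ} (ha0 : 0 ≤ a) (haL : a ≤ L)
    (ham : F a = m)
    (hne : ∀ s, a ≤ s → s < L → F s = m → slopeR F s ≤ 0) :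
    ∀ s, a ≤ s → s ≤ L → F s = m := by
  obtain ⟨n, t, ht0, htL, hmono, hlin⟩ := hpl
  suffices h : ∀ i : Fin (n + 1), ∀ s, a ≤ s → s ≤ t i → F s = m by
    intro s h1 h2; exact h (Fin.last n) s h1 (by rw [htL]; exact h2)
  intro i
  induction i using Fin.induction with
  | zero =>
      intro s h1 h2
      rw [ht0] at h2
      have hsa : s = a := le_antisymm (by linarith) h1
      rw [hsa]; exact ham
  | succ j ih =>
      intro s h1 h2
      by_cases hsc : s ≤ t j.castSucc
      · exact ih s h1 hsc
      push_neg at hsc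
      rcases eq_or_lt_of_le h1 with heq | h1'
      · rw [← heq]; exact ham
      set c := max a (t j.castSucc) with hc
      have hca : a ≤ c := le_max_left _ _
      have hcle : t j.castSucc ≤ c := le_max_right _ _
      have hcm : F c = m := by
        rcases max_cases a (t j.castSucc) with ⟨h', _⟩ | ⟨h', h''⟩ <;> rw [hc, h']
        · exact ham
        · exact ih _ (le_of_lt h'') le_rfl
      have hcs : c < s := max_lt h1' hsc
      obtain ⟨mu, hmu⟩ := hlin j
      have hfc : ∀ r ∈ Set.Icc c (t j.succ), F r = F c + (mu : ℝ) * (r - c) := by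
        intro r hr
        have ha1 := hmu r ⟨le_trans hcle hr.1, hr.2⟩
        have ha2 := hmu c ⟨hcle, le_trans (le_of_lt hcs) h2⟩
        rw [ha1, ha2]; ring
      have hRL : RLin F c mu :=
        ⟨t j.succ - c, by linarith, fun r hr =>
          hfc r ⟨hr.1, by have := hr.2; linarith⟩⟩
      have hjL : t j.succ ≤ L := by
        rw [← htL]; exact hmono.monotone (Fin.le_last _)
      have hcL : c < L := lt_of_lt_of_le (lt_of_lt_of_le hcs h2) hjL
      have hmle := hne c hca hcL hcm
      rw [slopeR_eq hRL] at hmle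
      have h0a : 0 ≤ c := le_trans ha0 hca
      have hnn : (0 : ℤ) ≤ mu := by
        apply hRL.nonneg (U := t j.succ) (lt_of_lt_of_le hcs h2)
        intro r hr1 hr2
        rw [hcm]
        exact hge r (le_trans h0a hr1) (le_trans hr2 hjL)
      have hmu0 : mu = 0 := le_antisymm hmle hnn
      have := hfc s ⟨le_of_lt hcs, h2⟩
      rw [hmu0] at this; simpa [hcm] using this

lemma scanL {F : ℝ → ℝ} {L m : ℝ} (hpl : PLInt F L)
    (hge : ∀ s, 0 ≤ s → s ≤ L → m ≤ F s) {a : ℝ} (ha0 : 0 ≤ a) (haL : a ≤ L)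
    (ham : F a = m)
    (hne : ∀ s, 0 < s → s ≤ a → F s = m → slopeL F s ≤ 0) :
    ∀ s, 0 ≤ s → s ≤ a → F s = m := by
  obtain ⟨n, t, ht0, htL, hmono, hlin⟩ := hpl
  suffices h : ∀ i : Fin (n + 1), ∀ s, t i ≤ s → s ≤ a → F s = m by
    intro s h1 h2; exact h 0 s (by rw [ht0]; exact h1) h2
  intro i
  induction i using Fin.reverseInduction with
  | last =>
      intro s h1 h2
      rw [htL] at h1
      have hsa : s = a := le_antisymm h2 (le_trans haL h1)
      rw [hsa]; exact ham
  | cast j ih =>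
      intro s h1 h2
      by_cases hsc : t j.succ ≤ s
      · exact ih s hsc h2
      push_neg at hsc
      rcases eq_or_lt_of_le h2 with heq | h2'
      · rw [heq]; exact ham
      set c := min a (t j.succ) with hc
      have hca : c ≤ a := min_le_left _ _
      have hcle : c ≤ t j.succ := min_le_right _ _
      have hcm : F c = m := by
        rcases min_cases a (t j.succ) with ⟨h', _⟩ | ⟨h', h''⟩ <;> rw [hc, h']
        · exact ham
        · exact ih _ le_rfl (le_of_lt h'')
      have hcs : s < c := lt_min h2' hsc
      obtain ⟨mu, hmu⟩ := hlin j
      have hfc : ∀ r ∈ Set.Icc (t j.castSucc) c, F r = F c + ((-mu : ℤ) : ℝ) * (c - r) := by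
        intro r hr
        have ha1 := hmu r ⟨hr.1, le_trans hr.2 hcle⟩
        have ha2 := hmu c ⟨le_trans h1 (le_of_lt hcs), hcle⟩
        rw [ha1, ha2]; push_cast; ring
      have hLL : LLin F c (-mu) :=
        ⟨c - t j.castSucc, by linarith [lt_of_le_of_lt h1 hcs], fun r hr =>
          hfc r ⟨by have := hr.1; linarith, hr.2⟩⟩
      have ht0c : (0 : ℝ) ≤ t j.castSucc := by rw [← ht0]; exact hmono.monotone (Fin.zero_le _)
      have hc0 : 0 < c := lt_of_le_of_lt (le_trans ht0c h1) hcs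
      have hmle := hne c hc0 hca hcm
      rw [slopeL_eq hLL] at hmle
      have hnn : (0 : ℤ) ≤ -mu := by
        apply hLL.nonneg (U := t j.castSucc) (lt_of_le_of_lt h1 hcs)
        intro r hr1 hr2
        rw [hcm]
        have hrL : r ≤ L := le_trans hr2 (le_trans hcle (by rw [← htL]; exact hmono.monotone (Fin.le_last _)))
        exact hge r (le_trans ht0c hr1) hrL
      have hmu0 : (-mu : ℤ) = 0 := le_antisymm hmle hnn
      have := hfc s ⟨h1, le_of_lt hcs⟩
      rw [hmu0] at this; simpa [hcm] using this

end Scan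

section UnitLemmas

variable {Γ : MetricGraphModel}

lemma unit_apply (p z : Γ.Pt) : unitDiv Γ p z = if z = p then 1 else 0 := rfl

lemma unit_nonneg (p z : Γ.Pt) : 0 ≤ unitDiv Γ p z := by
  rw [unit_apply]; split_ifs <;> omega

lemma pair_nonneg (p q z : Γ.Pt) : 0 ≤ unitDiv Γ p z + unitDiv Γ q z := by
  rw [unit_apply, unit_apply]; split_ifs <;> omega

lemma pair_le_two (p q z : Γ.Pt) : unitDiv Γ p z + unitDiv Γ q z ≤ 2 := by
  rw [unit_apply, unit_apply]; split_ifs <;> omega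

lemma pair_mem {p q z : Γ.Pt} (h : 1 ≤ unitDiv Γ p z + unitDiv Γ q z) : z = p ∨ z = q := by
  by_contra hcon
  push_neg at hcon
  rw [unit_apply, unit_apply, if_neg hcon.1, if_neg hcon.2] at h
  omega

lemma pair_two {p q z : Γ.Pt} (h : 2 ≤ unitDiv Γ p z + unitDiv Γ q z) : p = z ∧ q = z := by
  rw [unit_apply, unit_apply] at h
  split_ifs at h with h1 h2 h2
  · exact ⟨h1.symm, h2.symm⟩
  all_goals omega

lemma pair_pair {p q z1 z2 : Γ.Pt} (h1 : 1 ≤ unitDiv Γ p z1 + unitDiv Γ q z1)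
    (h2 : 1 ≤ unitDiv Γ p z2 + unitDiv Γ q z2) (hne : z1 ≠ z2) :
    (p = z1 ∧ q = z2) ∨ (p = z2 ∧ q = z1) := by
  rcases pair_mem h1 with ha | ha <;> rcases pair_mem h2 with hb | hb
  · exact absurd (ha.trans hb.symm) hne
  · exact Or.inl ⟨ha.symm, hb.symm⟩
  · exact Or.inr ⟨hb.symm, ha.symm⟩
  · exact absurd (ha.trans hb.symm) hne

end UnitLemmas

section RFOps

variable {Γ : MetricGraphModel}

lemma PLInt_neg {F : ℝ → ℝ} {L : ℝ} (h : PLInt F L) : PLInt (fun s => -F s) L := by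
  obtain ⟨n, t, h0, hL, hm, hl⟩ := h
  refine ⟨n, t, h0, hL, hm, fun i => ?_⟩
  obtain ⟨mu, hmu⟩ := hl i
  refine ⟨-mu, fun s hs => ?_⟩
  have := hmu s hs
  show -F s = -F (t i.castSucc) + ((-mu : ℤ) : ℝ) * (s - t i.castSucc)
  rw [this]; push_cast; ring

/-- Difference of two rational functions. -/
noncomputable def RFsub (f g : RationalFunction Γ) : RationalFunction Γ where
  vVal := fun v => f.vVal v - g.vVal v
  eFun := fun e s => f.eFun e s - g.eFun e s
  pl := fun e => PLInt_sub (f.pl e) (g.pl e)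
  srcVal := fun e => by
    show f.eFun e 0 - g.eFun e 0 = f.vVal (Γ.src e) - g.vVal (Γ.src e)
    rw [f.srcVal, g.srcVal]
  tgtVal := fun e => by
    show f.eFun e (Γ.len e) - g.eFun e (Γ.len e) = f.vVal (Γ.tgt e) - g.vVal (Γ.tgt e)
    rw [f.tgtVal, g.tgtVal]

lemma RFsub_slopeR (f g : RationalFunction Γ) (e : Γ.E) {s : ℝ} (h0 : 0 ≤ s)
    (h1 : s < Γ.len e) :
    slopeR ((RFsub f g).eFun e) s = slopeR (f.eFun e) s - slopeR (g.eFun e) s := by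
  obtain ⟨m1, hm1⟩ := exists_RLin (f.pl e) h0 h1
  obtain ⟨m2, hm2⟩ := exists_RLin (g.pl e) h0 h1
  rw [slopeR_eq (show RLin ((RFsub f g).eFun e) s (m1 - m2) from RLin.sub' hm1 hm2),
    slopeR_eq hm1, slopeR_eq hm2]

lemma RFsub_slopeL (f g : RationalFunction Γ) (e : Γ.E) {s : ℝ} (h0 : 0 < s)
    (h1 : s ≤ Γ.len e) :
    slopeL ((RFsub f g).eFun e) s = slopeL (f.eFun e) s - slopeL (g.eFun e) s := by
  obtain ⟨m1, hm1⟩ := exists_LLin (f.pl e) h0 h1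
  obtain ⟨m2, hm2⟩ := exists_LLin (g.pl e) h0 h1
  rw [slopeL_eq (show LLin ((RFsub f g).eFun e) s (m1 - m2) from LLin.sub' hm1 hm2),
    slopeL_eq hm1, slopeL_eq hm2]

lemma ratDiv_sub (f g : RationalFunction Γ) (z : Γ.Pt) :
    ratDiv (RFsub f g) z = ratDiv f z - ratDiv g z := by
  cases z with
  | inl v =>
      show (∑ e : Γ.E, _) = (∑ e : Γ.E, _) - (∑ e : Γ.E, _)
      rw [← Finset.sum_sub_distrib]
      refine Finset.sum_congr rfl fun e _ => ?_
      rw [RFsub_slopeR f g e le_rfl (Γ.len_pos e), RFsub_slopeL f g e (Γ.len_pos e) le_rfl]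
      split_ifs <;> ring
  | inr q =>
      obtain ⟨e, s, hs1, hs2⟩ := q
      show slopeR ((RFsub f g).eFun e) s + slopeL ((RFsub f g).eFun e) s =
        (slopeR (f.eFun e) s + slopeL (f.eFun e) s) -
          (slopeR (g.eFun e) s + slopeL (g.eFun e) s)
      rw [RFsub_slopeR f g e (le_of_lt hs1) hs2, RFsub_slopeL f g e hs1 (le_of_lt hs2)]
      ring

end RFOps


section MinMax

variable {Γ : MetricGraphModel}

lemma edge_val_pt (f : RationalFunction Γ) (e : Γ.E) {s : ℝ} (h0 : 0 ≤ s)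
    (h1 : s ≤ Γ.len e) : ∃ z : Γ.Pt, ratEval f z = f.eFun e s := by
  rcases eq_or_lt_of_le h0 with h | h
  · exact ⟨Sum.inl (Γ.src e), by show f.vVal _ = _; rw [← f.srcVal e, ← h]⟩
  rcases eq_or_lt_of_le h1 with h' | h'
  · exact ⟨Sum.inl (Γ.tgt e), by show f.vVal _ = _; rw [← f.tgtVal e, h']⟩
  · exact ⟨Sum.inr ⟨e, ⟨s, h, h'⟩⟩, rfl⟩

lemma edge_ge (f : RationalFunction Γ) {m : ℝ} (hm : ∀ z, m ≤ ratEval f z) (e : Γ.E) :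
    ∀ s, 0 ≤ s → s ≤ Γ.len e → m ≤ f.eFun e s := by
  intro s h0 h1
  obtain ⟨z, hz⟩ := edge_val_pt f e h0 h1
  rw [← hz]; exact hm z

lemma exists_min (hV : Nonempty Γ.V) (f : RationalFunction Γ) :
    ∃ z0 : Γ.Pt, ∀ z, ratEval f z0 ≤ ratEval f z := by
  classical
  have hpl := f.pl
  choose n t h0 hL hm hlin using hpl
  set bp : Γ.E → Finset ℝ :=
    fun e => Finset.univ.image (fun i : Fin (n e + 1) => f.eFun e (t e i)) with hbp
  set cand : Finset ℝ := (Finset.univ.image f.vVal) ∪ Finset.univ.biUnion bp with hcand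
  obtain ⟨v⟩ := hV
  have hne : cand.Nonempty := by
    refine ⟨f.vVal v, ?_⟩
    rw [hcand, Finset.mem_union]
    exact Or.inl (Finset.mem_image.mpr ⟨v, Finset.mem_univ _, rfl⟩)
  set M := cand.min' hne with hM
  have hlow : ∀ z, M ≤ ratEval f z := by
    intro z
    cases z with
    | inl u =>
        apply cand.min'_le
        rw [hcand, Finset.mem_union]
        exact Or.inl (Finset.mem_image.mpr ⟨u, Finset.mem_univ _, rfl⟩)
    | inr q =>
        obtain ⟨e, s, hs1, hs2⟩ := q
        have hbnd0 : t e 0 ≤ s := by rw [h0 e]; exact le_of_lt hs1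
        have hbndL : s < t e (Fin.last (n e)) := by rw [hL e]; exact hs2
        obtain ⟨i, hi1, hi2⟩ := locate (hm e) hbnd0 hbndL
        obtain ⟨mu, hmu⟩ := hlin e i
        have hmem1 : f.eFun e (t e i.castSucc) ∈ cand := by
          rw [hcand, Finset.mem_union]
          exact Or.inr (Finset.mem_biUnion.mpr ⟨e, Finset.mem_univ _,
            Finset.mem_image.mpr ⟨i.castSucc, Finset.mem_univ _, rfl⟩⟩)
        have hmem2 : f.eFun e (t e i.succ) ∈ cand := by
          rw [hcand, Finset.mem_union]
          exact Or.inr (Finset.mem_biUnion.mpr ⟨e, Finset.mem_univ _,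
            Finset.mem_image.mpr ⟨i.succ, Finset.mem_univ _, rfl⟩⟩)
        have hfs := hmu s ⟨hi1, le_of_lt hi2⟩
        have hfe := hmu (t e i.succ) ⟨le_of_lt (hm e (Fin.castSucc_lt_succ : i.castSucc < i.succ)), le_rfl⟩
        show M ≤ f.eFun e s
        rcases le_or_gt 0 (mu : ℝ) with hmu0 | hmu0
        · have h1 := cand.min'_le _ hmem1
          rw [← hM] at h1
          nlinarith [mul_nonneg hmu0 (sub_nonneg.mpr hi1)]
        · have h1 := cand.min'_le _ hmem2
          rw [← hM] at h1
          nlinarith [mul_nonneg (le_of_lt (neg_pos.mpr hmu0)) (sub_nonneg.mpr (le_of_lt hi2))]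
  have hmem := cand.min'_mem hne
  rcases Finset.mem_union.mp hmem with hmem | hmem
  · obtain ⟨u, _, hu⟩ := Finset.mem_image.mp hmem
    refine ⟨Sum.inl u, fun z => ?_⟩
    show f.vVal u ≤ _
    exact (le_of_eq hu).trans (hlow z)
  · obtain ⟨e, _, hmem2⟩ := Finset.mem_biUnion.mp hmem
    obtain ⟨i, _, hi⟩ := Finset.mem_image.mp hmem2
    have hb0 : (0 : ℝ) ≤ t e i := by rw [← h0 e]; exact (hm e).monotone (Fin.zero_le _)
    have hbL : t e i ≤ Γ.len e := by rw [← hL e]; exact (hm e).monotone (Fin.le_last _)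
    obtain ⟨z0, hz0⟩ := edge_val_pt f e hb0 hbL
    refine ⟨z0, fun z => ?_⟩
    rw [hz0]
    exact (le_of_eq hi).trans (hlow z)

lemma ratDiv_of_const (f : RationalFunction Γ) {c : ℝ} (hconst : ∀ z, ratEval f z = c) :
    ∀ z, ratDiv f z = 0 := by
  have hedge : ∀ (e : Γ.E) (s : ℝ), 0 ≤ s → s ≤ Γ.len e → f.eFun e s = c := by
    intro e s h0 h1
    obtain ⟨z, hz⟩ := edge_val_pt f e h0 h1
    rw [← hz]; exact hconst z
  have hR : ∀ (e : Γ.E) (s : ℝ), 0 ≤ s → s < Γ.len e → slopeR (f.eFun e) s = 0 := by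
    intro e s h0 h1
    apply slopeR_eq
    refine ⟨Γ.len e - s, by linarith, fun r hr => ?_⟩
    rw [hedge e r (le_trans h0 hr.1) (by have := hr.2; linarith),
      hedge e s h0 (le_of_lt h1)]
    simp
  have hLm : ∀ (e : Γ.E) (s : ℝ), 0 < s → s ≤ Γ.len e → slopeL (f.eFun e) s = 0 := by
    intro e s h0 h1
    apply slopeL_eq
    refine ⟨s, h0, fun r hr => ?_⟩
    rw [hedge e r (by have := hr.1; linarith) (le_trans hr.2 h1),
      hedge e s (le_of_lt h0) h1]
    simp
  intro z
  cases z with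
  | inl v =>
      show (∑ e : Γ.E, _) = 0
      apply Finset.sum_eq_zero
      intro e _
      rw [hR e 0 le_rfl (Γ.len_pos e), hLm e (Γ.len e) (Γ.len_pos e) le_rfl]
      split_ifs <;> ring
  | inr q =>
      obtain ⟨e, s, hs1, hs2⟩ := q
      show slopeR (f.eFun e) s + slopeL (f.eFun e) s = 0
      rw [hR e s (le_of_lt hs1) hs2, hLm e s hs1 (le_of_lt hs2)]
      ring

end MinMax


section NegAndHelpers

variable {Γ : MetricGraphModel}

lemma RLin.neg {F : ℝ → ℝ} {c : ℝ} {m : ℤ} (h : RLin F c m) :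
    RLin (fun s => -F s) c (-m) := by
  obtain ⟨ε, hε, he⟩ := h
  refine ⟨ε, hε, fun s hs => ?_⟩
  show -F s = -F c + ((-m : ℤ) : ℝ) * (s - c)
  rw [he s hs]; push_cast; ring

lemma LLin.neg {F : ℝ → ℝ} {c : ℝ} {m : ℤ} (h : LLin F c m) :
    LLin (fun s => -F s) c (-m) := by
  obtain ⟨ε, hε, he⟩ := h
  refine ⟨ε, hε, fun s hs => ?_⟩
  show -F s = -F c + ((-m : ℤ) : ℝ) * (c - s)
  rw [he s hs]; push_cast; ring

/-- Negation of a rational function. -/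
noncomputable def RFneg (f : RationalFunction Γ) : RationalFunction Γ where
  vVal := fun v => -f.vVal v
  eFun := fun e s => -f.eFun e s
  pl := fun e => PLInt_neg (f.pl e)
  srcVal := fun e => by show -f.eFun e 0 = -f.vVal (Γ.src e); rw [f.srcVal]
  tgtVal := fun e => by show -f.eFun e (Γ.len e) = -f.vVal (Γ.tgt e); rw [f.tgtVal]

lemma ratEval_neg (f : RationalFunction Γ) (z : Γ.Pt) :
    ratEval (RFneg f) z = -ratEval f z := by cases z <;> rfl

lemma ratDiv_neg (f : RationalFunction Γ) (z : Γ.Pt) :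
    ratDiv (RFneg f) z = -ratDiv f z := by
  have hsl : ∀ (e : Γ.E) (s : ℝ), 0 ≤ s → s < Γ.len e →
      slopeR ((RFneg f).eFun e) s = -slopeR (f.eFun e) s := by
    intro e s h0 h1
    obtain ⟨m1, hm1⟩ := exists_RLin (f.pl e) h0 h1
    rw [slopeR_eq (show RLin ((RFneg f).eFun e) s (-m1) from hm1.neg), slopeR_eq hm1]
  have hsL : ∀ (e : Γ.E) (s : ℝ), 0 < s → s ≤ Γ.len e →
      slopeL ((RFneg f).eFun e) s = -slopeL (f.eFun e) s := by
    intro e s h0 h1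
    obtain ⟨m1, hm1⟩ := exists_LLin (f.pl e) h0 h1
    rw [slopeL_eq (show LLin ((RFneg f).eFun e) s (-m1) from hm1.neg), slopeL_eq hm1]
  cases z with
  | inl v =>
      show (∑ e : Γ.E, _) = -(∑ e : Γ.E, _)
      rw [← Finset.sum_neg_distrib]
      refine Finset.sum_congr rfl fun e _ => ?_
      rw [hsl e 0 le_rfl (Γ.len_pos e), hsL e (Γ.len e) (Γ.len_pos e) le_rfl]
      split_ifs <;> ring
  | inr q =>
      obtain ⟨e, s, hs1, hs2⟩ := q
      show slopeR ((RFneg f).eFun e) s + slopeL ((RFneg f).eFun e) s =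
        -(slopeR (f.eFun e) s + slopeL (f.eFun e) s)
      rw [hsl e s (le_of_lt hs1) hs2, hsL e s hs1 (le_of_lt hs2)]
      ring

lemma slopeR_nonneg_at_min (f : RationalFunction Γ) {m : ℝ} (hm : ∀ z, m ≤ ratEval f z)
    (e : Γ.E) {s : ℝ} (h0 : 0 ≤ s) (h1 : s < Γ.len e) (hs : f.eFun e s = m) :
    0 ≤ slopeR (f.eFun e) s := by
  obtain ⟨mu, hmu⟩ := exists_RLin (f.pl e) h0 h1
  rw [slopeR_eq hmu]
  apply hmu.nonneg (U := Γ.len e) h1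
  intro r hr1 hr2
  rw [hs]
  exact edge_ge f hm e r (le_trans h0 hr1) hr2

lemma slopeL_nonneg_at_min (f : RationalFunction Γ) {m : ℝ} (hm : ∀ z, m ≤ ratEval f z)
    (e : Γ.E) {s : ℝ} (h0 : 0 < s) (h1 : s ≤ Γ.len e) (hs : f.eFun e s = m) :
    0 ≤ slopeL (f.eFun e) s := by
  obtain ⟨mu, hmu⟩ := exists_LLin (f.pl e) h0 h1
  rw [slopeL_eq hmu]
  apply hmu.nonneg (U := (0 : ℝ)) h0
  intro r hr1 hr2
  rw [hs]
  exact edge_ge f hm e r hr1 (le_trans hr2 h1)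

lemma inr_pt_param {e : Γ.E} {s t : ℝ} {hs : 0 < s ∧ s < Γ.len e} {ht : 0 < t ∧ t < Γ.len e}
    (h : (Sum.inr ⟨e, ⟨s, hs⟩⟩ : Γ.Pt) = Sum.inr ⟨e, ⟨t, ht⟩⟩) : s = t := by
  have h2 : (⟨e, ⟨s, hs⟩⟩ : Σ e : Γ.E, {t : ℝ // 0 < t ∧ t < Γ.len e}) = ⟨e, ⟨t, ht⟩⟩ :=
    Sum.inr.inj h
  have h3 := (Sigma.mk.inj_iff.mp h2).2
  have h4 : (⟨s, hs⟩ : {t : ℝ // 0 < t ∧ t < Γ.len e}) = ⟨t, ht⟩ := eq_of_heq h3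
  exact congrArg Subtype.val h4

lemma inr_pt_edge {e e' : Γ.E} {a : {t : ℝ // 0 < t ∧ t < Γ.len e}}
    {b : {t : ℝ // 0 < t ∧ t < Γ.len e'}}
    (h : (Sum.inr ⟨e, a⟩ : Γ.Pt) = Sum.inr ⟨e', b⟩) : e = e' := by
  have h2 := Sum.inr.inj h
  exact (Sigma.mk.inj_iff.mp h2).1

end NegAndHelpers

section LemA

variable {Γ : MetricGraphModel}

/-- If the minimum of `g` is attained only away from the vertices, then the
"upper" divisor `p + q` has both points in the interior of one edge. -/
lemma lemA (g : RationalFunction Γ) (p q : Γ.Pt) (E' : Divisor Γ)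
    (hE' : ∀ z, 0 ≤ E' z)
    (hdiv : ∀ z, unitDiv Γ p z + unitDiv Γ q z = E' z + ratDiv g z)
    (z0 : Γ.Pt) (hmin : ∀ z, ratEval g z0 ≤ ratEval g z)
    (hvert : ∀ v : Γ.V, ratEval g z0 < g.vVal v) :
    SameEdgeInterior Γ p q := by
  obtain (v | ⟨e, s0, hs01, hs02⟩) := z0
  · exact absurd (hvert v) (by show ¬ (g.vVal v < g.vVal v); simp)
  set m := g.eFun e s0 with hmdef
  have hmin' : ∀ z, m ≤ ratEval g z := hmin
  have hvert' : ∀ v : Γ.V, m < g.vVal v := hvert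
  have hgeE : ∀ s, 0 ≤ s → s ≤ Γ.len e → m ≤ g.eFun e s := edge_ge g hmin' e
  -- right exit
  have hex2 : ∃ σ, s0 ≤ σ ∧ σ < Γ.len e ∧ g.eFun e σ = m ∧ 1 ≤ slopeR (g.eFun e) σ := by
    by_contra hcon
    push_neg at hcon
    have hscan := scanR (g.pl e) hgeE (le_of_lt hs01) (le_of_lt hs02) hmdef.symm
      (fun s h1 h2 h3 => by have := hcon s h1 h2 h3; omega)
    have hfin := hscan (Γ.len e) (le_of_lt hs02) le_rfl
    rw [g.tgtVal e] at hfin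
    exact absurd hfin (ne_of_gt (hvert' (Γ.tgt e)))
  -- left exit
  have hex1 : ∃ σ, 0 < σ ∧ σ ≤ s0 ∧ g.eFun e σ = m ∧ 1 ≤ slopeL (g.eFun e) σ := by
    by_contra hcon
    push_neg at hcon
    have hscan := scanL (g.pl e) hgeE (le_of_lt hs01) (le_of_lt hs02) hmdef.symm
      (fun s h1 h2 h3 => by have := hcon s h1 h2 h3; omega)
    have hfin := hscan 0 le_rfl (le_of_lt hs01)
    rw [g.srcVal e] at hfin
    exact absurd hfin (ne_of_gt (hvert' (Γ.src e)))
  obtain ⟨σ2, hσ21, hσ22, hσ2m, hσ2s⟩ := hex2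
  obtain ⟨σ1, hσ11, hσ12, hσ1m, hσ1s⟩ := hex1
  have hσ20 : 0 < σ2 := lt_of_lt_of_le hs01 hσ21
  have hσ1L : σ1 < Γ.len e := lt_of_le_of_lt hσ12 hs02
  set z2 : Γ.Pt := Sum.inr ⟨e, ⟨σ2, hσ20, hσ22⟩⟩ with hz2
  set z1 : Γ.Pt := Sum.inr ⟨e, ⟨σ1, hσ11, hσ1L⟩⟩ with hz1
  have hd2 : 1 ≤ ratDiv g z2 := by
    have hL := slopeL_nonneg_at_min g hmin' e hσ20 (le_of_lt hσ22) hσ2m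
    show 1 ≤ slopeR (g.eFun e) σ2 + slopeL (g.eFun e) σ2
    omega
  have hd1 : 1 ≤ ratDiv g z1 := by
    have hR := slopeR_nonneg_at_min g hmin' e (le_of_lt hσ11) hσ1L hσ1m
    show 1 ≤ slopeR (g.eFun e) σ1 + slopeL (g.eFun e) σ1
    omega
  have hE2 : 1 ≤ unitDiv Γ p z2 + unitDiv Γ q z2 := by
    have := hdiv z2; have := hE' z2; omega
  have hE1 : 1 ≤ unitDiv Γ p z1 + unitDiv Γ q z1 := by
    have := hdiv z1; have := hE' z1; omega
  by_cases hσ : σ1 = σ2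
  · -- double point
    subst hσ
    have hz12 : z1 = z2 := by
      rw [hz1, hz2]
    have hd : 2 ≤ ratDiv g z1 := by
      show 2 ≤ slopeR (g.eFun e) σ1 + slopeL (g.eFun e) σ1
      omega
    have hE : 2 ≤ unitDiv Γ p z1 + unitDiv Γ q z1 := by
      have := hdiv z1; have := hE' z1; omega
    obtain ⟨hp, hq⟩ := pair_two hE
    exact ⟨e, ⟨⟨σ1, hσ11, hσ1L⟩, hp⟩, ⟨⟨σ1, hσ11, hσ1L⟩, hq⟩⟩
  · have hzne : z1 ≠ z2 := fun hcon => hσ (inr_pt_param hcon)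
    rcases pair_pair hE1 hE2 hzne with ⟨hp, hq⟩ | ⟨hp, hq⟩
    · exact ⟨e, ⟨⟨σ1, hσ11, hσ1L⟩, hp⟩, ⟨⟨σ2, hσ20, hσ22⟩, hq⟩⟩
    · exact ⟨e, ⟨⟨σ2, hσ20, hσ22⟩, hp⟩, ⟨⟨σ1, hσ11, hσ1L⟩, hq⟩⟩

end LemA


section KeyLemma

variable {Γ : MetricGraphModel}

noncomputable def term (h : RationalFunction Γ) (e : Γ.E) (v : Γ.V) : ℤ :=
  (if Γ.src e = v then slopeR (h.eFun e) 0 else 0) +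
  (if Γ.tgt e = v then slopeL (h.eFun e) (Γ.len e) else 0)

lemma ratDiv_vertex (h : RationalFunction Γ) (v : Γ.V) :
    ratDiv h (Sum.inl v) = ∑ e : Γ.E, term h e v := rfl

def HasExit (h : RationalFunction Γ) (m : ℝ) (e : Γ.E) : Prop :=
  (∃ s, 0 ≤ s ∧ s < Γ.len e ∧ h.eFun e s = m ∧ 1 ≤ slopeR (h.eFun e) s) ∨
  (∃ s, 0 < s ∧ s ≤ Γ.len e ∧ h.eFun e s = m ∧ 1 ≤ slopeL (h.eFun e) s)

def Contrib (h : RationalFunction Γ) (m : ℝ) (e : Γ.E) (z : Γ.Pt) : Prop :=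
  (∃ (s : ℝ) (hs : 0 < s ∧ s < Γ.len e), z = Sum.inr ⟨e, ⟨s, hs⟩⟩ ∧ h.eFun e s = m ∧
    (1 ≤ slopeR (h.eFun e) s ∨ 1 ≤ slopeL (h.eFun e) s)) ∨
  (z = Sum.inl (Γ.src e) ∧ h.eFun e 0 = m ∧ 1 ≤ slopeR (h.eFun e) 0) ∨
  (z = Sum.inl (Γ.tgt e) ∧ h.eFun e (Γ.len e) = m ∧ 1 ≤ slopeL (h.eFun e) (Γ.len e))

lemma hasExit_contrib {h : RationalFunction Γ} {m : ℝ} {e : Γ.E} (hex : HasExit h m e) :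
    ∃ z, Contrib h m e z := by
  rcases hex with ⟨s, h0, h1, hsm, hsl⟩ | ⟨s, h0, h1, hsm, hsl⟩
  · rcases eq_or_lt_of_le h0 with h0' | h0'
    · rw [← h0'] at hsm hsl
      exact ⟨Sum.inl (Γ.src e), Or.inr (Or.inl ⟨rfl, hsm, hsl⟩)⟩
    · exact ⟨Sum.inr ⟨e, ⟨s, h0', h1⟩⟩, Or.inl ⟨s, ⟨h0', h1⟩, rfl, hsm, Or.inl hsl⟩⟩
  · rcases eq_or_lt_of_le h1 with h1' | h1'
    · rw [h1'] at hsm hsl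
      exact ⟨Sum.inl (Γ.tgt e), Or.inr (Or.inr ⟨rfl, hsm, hsl⟩)⟩
    · exact ⟨Sum.inr ⟨e, ⟨s, h0, h1'⟩⟩, Or.inl ⟨s, ⟨h0, h1'⟩, rfl, hsm, Or.inr hsl⟩⟩

lemma term_nonneg (h : RationalFunction Γ) {m : ℝ} (hmin : ∀ z, m ≤ ratEval h z)
    (e : Γ.E) (v : Γ.V) (hv : h.vVal v = m) : 0 ≤ term h e v := by
  have h1 : Γ.src e = v → 0 ≤ slopeR (h.eFun e) 0 := fun hsrc =>
    slopeR_nonneg_at_min h hmin e le_rfl (Γ.len_pos e) (by rw [h.srcVal, hsrc, hv])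
  have h2 : Γ.tgt e = v → 0 ≤ slopeL (h.eFun e) (Γ.len e) := fun htgt =>
    slopeL_nonneg_at_min h hmin e (Γ.len_pos e) le_rfl (by rw [h.tgtVal, htgt, hv])
  unfold term
  split_ifs with hs ht ht
  · have := h1 hs; have := h2 ht; omega
  · have := h1 hs; omega
  · have := h2 ht; omega
  · omega

lemma contrib_vm {h : RationalFunction Γ} {m : ℝ} {e : Γ.E} {v : Γ.V}
    (hc : Contrib h m e (Sum.inl v)) : h.vVal v = m := by
  rcases hc with ⟨s, hs, heq, _, _⟩ | ⟨heq, hsm, _⟩ | ⟨heq, hsm, _⟩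
  · exact absurd heq (by simp)
  · have hv := Sum.inl.inj heq
    rw [hv, ← h.srcVal e]; exact hsm
  · have hv := Sum.inl.inj heq
    rw [hv, ← h.tgtVal e]; exact hsm

lemma contrib_term {h : RationalFunction Γ} {m : ℝ} (hmin : ∀ z, m ≤ ratEval h z)
    {e : Γ.E} {v : Γ.V} (hc : Contrib h m e (Sum.inl v)) : 1 ≤ term h e v := by
  have hvm : h.vVal v = m := contrib_vm hc
  have h1 : Γ.src e = v → 0 ≤ slopeR (h.eFun e) 0 := fun hsrc =>
    slopeR_nonneg_at_min h hmin e le_rfl (Γ.len_pos e) (by rw [h.srcVal, hsrc, hvm])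
  have h2 : Γ.tgt e = v → 0 ≤ slopeL (h.eFun e) (Γ.len e) := fun htgt =>
    slopeL_nonneg_at_min h hmin e (Γ.len_pos e) le_rfl (by rw [h.tgtVal, htgt, hvm])
  rcases hc with ⟨s, hs, heq, _, _⟩ | ⟨heq, hsm, hsl⟩ | ⟨heq, hsm, hsl⟩
  · exact absurd heq (by simp)
  · have hv := Sum.inl.inj heq
    unfold term
    rw [if_pos hv.symm]
    split_ifs with ht
    · have := h2 ht; omega
    · omega
  · have hv := Sum.inl.inj heq
    unfold term
    rw [if_pos hv.symm]
    split_ifs with hsrc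
    · have := h1 hsrc; omega
    · omega

lemma card_le_ratDiv (h : RationalFunction Γ) {m : ℝ} (hmin : ∀ z, m ≤ ratEval h z)
    (v : Γ.V) (hv : h.vVal v = m) (T : Finset Γ.E)
    (hT : ∀ e ∈ T, 1 ≤ term h e v) : (T.card : ℤ) ≤ ratDiv h (Sum.inl v) := by
  rw [ratDiv_vertex]
  calc (T.card : ℤ) = ∑ _e ∈ T, (1 : ℤ) := by simp
    _ ≤ ∑ e ∈ T, term h e v := Finset.sum_le_sum hT
    _ ≤ ∑ e : Γ.E, term h e v :=
        Finset.sum_le_sum_of_subset_of_nonneg (Finset.subset_univ T)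
          (fun e _ _ => term_nonneg h hmin e v hv)

lemma contrib_ratDiv_one {h : RationalFunction Γ} {m : ℝ} (hmin : ∀ z, m ≤ ratEval h z)
    {e : Γ.E} {z : Γ.Pt} (hc : Contrib h m e z) : 1 ≤ ratDiv h z := by
  rcases hc with ⟨s, hs, rfl, hsm, hsl⟩ | hc'
  · show 1 ≤ slopeR (h.eFun e) s + slopeL (h.eFun e) s
    have hR := slopeR_nonneg_at_min h hmin e (le_of_lt hs.1) hs.2 hsm
    have hL := slopeL_nonneg_at_min h hmin e hs.1 (le_of_lt hs.2) hsm
    omega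
  · have hz : ∃ v, z = Sum.inl v := by
      rcases hc' with ⟨h1, _⟩ | ⟨h1, _⟩ <;> exact ⟨_, h1⟩
    obtain ⟨v, rfl⟩ := hz
    have hvm := contrib_vm (Or.inr hc')
    have hle := card_le_ratDiv h hmin v hvm {e} ?_
    · simpa using hle
    · intro e' he'
      rw [Finset.mem_singleton] at he'
      subst he'
      exact contrib_term hmin (Or.inr hc')

lemma caseA (h3ec : Γ.ThreeEdgeConnected) (h : RationalFunction Γ) {m : ℝ}
    (hmin : ∀ z, m ≤ ratEval h z) (p q p' q' : Γ.Pt)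
    (hdiv : ∀ z, unitDiv Γ p z + unitDiv Γ q z
      = (unitDiv Γ p' z + unitDiv Γ q' z) + ratDiv h z)
    (v0 : Γ.V) (hv0 : h.vVal v0 = m) (w : Γ.V) (hw : h.vVal w ≠ m) : False := by
  classical
  set S : Finset Γ.E := Finset.univ.filter (HasExit h m) with hS
  have hSmem : ∀ e ∈ S, HasExit h m e := fun e he => (Finset.mem_filter.mp he).2
  have hScard : S.card ≤ 2 := by
    by_contra hbig
    push_neg at hbig
    obtain ⟨e1, e2, e3, he1, he2, he3, h12, h13, h23⟩ := Finset.two_lt_card_iff.mp hbig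
    obtain ⟨z1, hc1⟩ := hasExit_contrib (hSmem e1 he1)
    obtain ⟨z2, hc2⟩ := hasExit_contrib (hSmem e2 he2)
    obtain ⟨z3, hc3⟩ := hasExit_contrib (hSmem e3 he3)
    have hE : ∀ (e : Γ.E) (z : Γ.Pt), Contrib h m e z →
        1 ≤ unitDiv Γ p z + unitDiv Γ q z := by
      intro e z hc
      have h1 := contrib_ratDiv_one hmin hc
      have h2 := pair_nonneg p' q' z
      have h3 := hdiv z; omega
    have hm1 := pair_mem (hE e1 z1 hc1)
    have hm2 := pair_mem (hE e2 z2 hc2)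
    have hm3 := pair_mem (hE e3 z3 hc3)
    have hdouble : ∀ (ea eb ec : Γ.E) (za zc : Γ.Pt), ea ≠ eb → ea ≠ ec → eb ≠ ec →
        Contrib h m ea za → Contrib h m eb za → Contrib h m ec zc →
        (zc = p ∨ zc = q) → False := by
      intro ea eb ec za zc hab hac hbc hca hcb hcc hzc
      have hvert : ∃ v, za = Sum.inl v := by
        rcases hca with ⟨sa, hsa, heqa, _⟩ | hca'
        · rcases hcb with ⟨sb, hsb, heqb, _⟩ | hcb'
          · exact absurd (inr_pt_edge (heqa.symm.trans heqb)) hab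
          · rcases hcb' with ⟨heqb, _⟩ | ⟨heqb, _⟩ <;>
              exact absurd (heqa.symm.trans heqb) (by simp)
        · rcases hca' with ⟨h1, _⟩ | ⟨h1, _⟩ <;> exact ⟨_, h1⟩
      obtain ⟨v, rfl⟩ := hvert
      have hvm := contrib_vm hca
      have hT2 : (2 : ℤ) ≤ ratDiv h (Sum.inl v) := by
        have hle := card_le_ratDiv h hmin v hvm {ea, eb} ?_
        · have hcd : ({ea, eb} : Finset Γ.E).card = 2 := by
            rw [Finset.card_insert_of_notMem (by simpa using hab), Finset.card_singleton]
          rw [hcd] at hle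
          exact_mod_cast hle
        · intro e' he'
          rcases Finset.mem_insert.mp he' with rfl | he'
          · exact contrib_term hmin hca
          · rw [Finset.mem_singleton] at he'; subst he'
            exact contrib_term hmin hcb
      have hE2 : 2 ≤ unitDiv Γ p (Sum.inl v) + unitDiv Γ q (Sum.inl v) := by
        have ha := hdiv (Sum.inl v)
        have hb := pair_nonneg p' q' (Sum.inl v)
        omega
      obtain ⟨hp, hq⟩ := pair_two hE2
      have hzc' : zc = Sum.inl v := by
        rcases hzc with hzz | hzz
        · rw [hzz]; exact hp
        · rw [hzz]; exact hq
      subst hzc'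
      have hT3 : (3 : ℤ) ≤ ratDiv h (Sum.inl v) := by
        have hle := card_le_ratDiv h hmin v hvm {ea, eb, ec} ?_
        · have hcd : ({ea, eb, ec} : Finset Γ.E).card = 3 := by
            rw [Finset.card_insert_of_notMem (by simp [hab, hac]),
              Finset.card_insert_of_notMem (by simpa using hbc), Finset.card_singleton]
          rw [hcd] at hle
          exact_mod_cast hle
        · intro e' he'
          rcases Finset.mem_insert.mp he' with rfl | he'
          · exact contrib_term hmin hca
          rcases Finset.mem_insert.mp he' with rfl | he'
          · exact contrib_term hmin hcb
          rw [Finset.mem_singleton] at he'; subst he'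
          exact contrib_term hmin hcc
      have hle2 := pair_le_two p q (Sum.inl v)
      have ha := hdiv (Sum.inl v)
      have hb := pair_nonneg p' q' (Sum.inl v)
      omega
    have hpair : z1 = z2 ∨ z1 = z3 ∨ z2 = z3 := by
      rcases hm1 with h1 | h1 <;> rcases hm2 with h2 | h2 <;> rcases hm3 with h3 | h3 <;>
        subst h1 <;> subst h2 <;> subst h3 <;> simp
    rcases hpair with hzz | hzz | hzz
    · subst hzz; exact hdouble e1 e2 e3 z1 z3 h12 h13 h23 hc1 hc2 hc3 hm3
    · subst hzz; exact hdouble e1 e3 e2 z1 z2 h13 h12 (Ne.symm h23) hc1 hc3 hc2 hm2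
    · subst hzz; exact hdouble e2 e3 e1 z2 z1 h23 (Ne.symm h12) (Ne.symm h13) hc2 hc3 hc1 hm1
  have hnoexit : ∀ e : Γ.E, e ∉ S → ¬ HasExit h m e := fun e he hex =>
    he (Finset.mem_filter.mpr ⟨Finset.mem_univ _, hex⟩)
  obtain ⟨Lw, hwalk, havoid⟩ := h3ec S hScard v0 w
  have hgeE : ∀ e : Γ.E, ∀ s, 0 ≤ s → s ≤ Γ.len e → m ≤ h.eFun e s :=
    fun e => edge_ge h hmin e
  have hprop : ∀ (lst : List (Γ.E × Bool)) (u : Γ.V), IsWalk Γ lst u w →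
      (∀ x ∈ lst, x.1 ∉ S) → h.vVal u = m → False := by
    intro lst
    induction lst with
    | nil =>
        intro u hwk hav hu
        have huw : u = w := hwk
        rw [huw] at hu; exact hw hu
    | cons x xs ih =>
        intro u hwk hav hu
        obtain ⟨hsrc, hrest⟩ := hwk
        have hnex : ¬ HasExit h m x.1 := hnoexit _ (hav x List.mem_cons_self)
        rw [HasExit, not_or] at hnex
        obtain ⟨hnR, hnL⟩ := hnex
        push_neg at hnR hnL
        have htgt : h.vVal (Γ.dTgt x) = m := by
          cases hb : x.2
          · -- traversed backwards: from tgt to src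
            have hds : Γ.dSrc x = Γ.tgt x.1 := by simp [MetricGraphModel.dSrc, hb]
            have hdt : Γ.dTgt x = Γ.src x.1 := by simp [MetricGraphModel.dTgt, hb]
            have hLm : h.eFun x.1 (Γ.len x.1) = m := by
              rw [h.tgtVal, ← hds, hsrc]; exact hu
            have hscan := scanL (h.pl x.1) (hgeE x.1) (le_of_lt (Γ.len_pos x.1)) le_rfl hLm
              (fun s hs1 hs2 hs3 => by have := hnL s hs1 hs2 hs3; omega)
            have h0m := hscan 0 le_rfl (le_of_lt (Γ.len_pos x.1))
            rw [h.srcVal] at h0m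
            rw [hdt]; exact h0m
          · have hds : Γ.dSrc x = Γ.src x.1 := by simp [MetricGraphModel.dSrc, hb]
            have hdt : Γ.dTgt x = Γ.tgt x.1 := by simp [MetricGraphModel.dTgt, hb]
            have h0m : h.eFun x.1 0 = m := by
              rw [h.srcVal, ← hds, hsrc]; exact hu
            have hscan := scanR (h.pl x.1) (hgeE x.1) le_rfl (le_of_lt (Γ.len_pos x.1)) h0m
              (fun s hs1 hs2 hs3 => by have := hnR s hs1 hs2 hs3; omega)
            have hLm := hscan (Γ.len x.1) (le_of_lt (Γ.len_pos x.1)) le_rfl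
            rw [h.tgtVal] at hLm
            rw [hdt]; exact hLm
        exact ih (Γ.dTgt x) hrest (fun y hy => hav y (List.mem_cons_of_mem _ hy)) htgt
  exact hprop Lw v0 hwalk havoid hv0

/-- The key rigidity lemma: two linearly equivalent "admissible pairs" coincide. -/
lemma keyLemma (hV : Nonempty Γ.V) (h3ec : Γ.ThreeEdgeConnected)
    (h : RationalFunction Γ) (p q p' q' : Γ.Pt)
    (hpq : ¬ SameEdgeInterior Γ p q) (hpq' : ¬ SameEdgeInterior Γ p' q')
    (hdiv : ∀ z, unitDiv Γ p z + unitDiv Γ q z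
      = (unitDiv Γ p' z + unitDiv Γ q' z) + ratDiv h z) :
    ∀ z, unitDiv Γ p z + unitDiv Γ q z = unitDiv Γ p' z + unitDiv Γ q' z := by
  obtain ⟨z0, hz0⟩ := exists_min hV h
  set m := ratEval h z0 with hm
  by_cases hconst : ∀ z, ratEval h z = m
  · intro z
    have hd := hdiv z
    rw [ratDiv_of_const h hconst z] at hd
    omega
  · exfalso
    obtain ⟨zs, hzs⟩ := not_forall.mp hconst
    have hzs' : m < ratEval h zs := lt_of_le_of_ne (hz0 zs) (Ne.symm hzs)
    by_cases hC : ∃ v, h.vVal v = m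
    · obtain ⟨v0, hv0⟩ := hC
      by_cases hD : ∀ v, h.vVal v = m
      · obtain ⟨z0', hz0'⟩ := exists_min hV (RFneg h)
        have hvert : ∀ v : Γ.V, ratEval (RFneg h) z0' < (RFneg h).vVal v := by
          intro v
          have h1 : ratEval (RFneg h) z0' ≤ ratEval (RFneg h) zs := hz0' zs
          simp only [ratEval_neg] at h1
          have h2 : (RFneg h).vVal v = -m := by show -h.vVal v = -m; rw [hD v]
          rw [h2, ratEval_neg]; linarith
        have hdiv' : ∀ z, unitDiv Γ p' z + unitDiv Γ q' z
            = (unitDiv Γ p z + unitDiv Γ q z) + ratDiv (RFneg h) z := by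
          intro z; rw [ratDiv_neg]; have := hdiv z; omega
        exact hpq' (lemA (RFneg h) p' q' _ (fun z => pair_nonneg p q z) hdiv' z0' hz0' hvert)
      · push_neg at hD
        obtain ⟨w, hw⟩ := hD
        exact caseA h3ec h hz0 p q p' q' hdiv v0 hv0 w hw
    · push_neg at hC
      exact hpq (lemA h p q _ (fun z => pair_nonneg p' q' z) hdiv z0 hz0
        (fun v => lt_of_le_of_ne (hz0 (Sum.inl v)) (Ne.symm (hC v))))

end KeyLemma


section Assembly

variable {Γ : MetricGraphModel}

lemma cancelLemma (hV : Nonempty Γ.V) (h3ec : Γ.ThreeEdgeConnected) {D : Divisor Γ}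
    {z r1 r2 r1' r2' : Γ.Pt} (f1 f2 : RationalFunction Γ)
    (h1 : ∀ w, D w = (unitDiv Γ z w + unitDiv Γ r1 w + unitDiv Γ r2 w) + ratDiv f1 w)
    (h2 : ∀ w, D w = (unitDiv Γ z w + unitDiv Γ r1' w + unitDiv Γ r2' w) + ratDiv f2 w)
    (hr : ¬ SameEdgeInterior Γ r1 r2) (hr' : ¬ SameEdgeInterior Γ r1' r2') :
    ∀ w, unitDiv Γ r1 w + unitDiv Γ r2 w = unitDiv Γ r1' w + unitDiv Γ r2' w := by
  apply keyLemma hV h3ec (RFsub f2 f1) r1 r2 r1' r2' hr hr'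
  intro w
  rw [ratDiv_sub]
  have ha := h1 w; have hb := h2 w
  omega

lemma not_same_inl (x : Γ.V) (q : Γ.Pt) : ¬ SameEdgeInterior Γ (Sum.inl x) q := by
  rintro ⟨e, ⟨q', heq⟩, _⟩
  exact absurd heq (by simp)

lemma extract (x : Γ.V) (p q z : Γ.Pt)
    (hz : 1 ≤ unitDiv Γ (Sum.inl x) z + unitDiv Γ p z + unitDiv Γ q z)
    (hpq : ¬ SameEdgeInterior Γ p q) :
    ∃ r1 r2, (∀ w, unitDiv Γ (Sum.inl x) w + unitDiv Γ p w + unitDiv Γ q w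
      = unitDiv Γ z w + unitDiv Γ r1 w + unitDiv Γ r2 w) ∧ ¬ SameEdgeInterior Γ r1 r2 := by
  have hmem : z = Sum.inl x ∨ z = p ∨ z = q := by
    by_contra hcon
    push_neg at hcon
    rw [unit_apply, unit_apply, unit_apply, if_neg hcon.1, if_neg hcon.2.1,
      if_neg hcon.2.2] at hz
    omega
  rcases hmem with rfl | rfl | rfl
  · exact ⟨p, q, fun w => by ring, hpq⟩
  · refine ⟨Sum.inl x, q, fun w => by ring, not_same_inl x q⟩
  · refine ⟨Sum.inl x, p, fun w => by ring, not_same_inl x p⟩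

/-- Two admissible representatives sharing a support point are equal. -/
lemma adm_unique (hV : Nonempty Γ.V) (h3ec : Γ.ThreeEdgeConnected) (D : Divisor Γ)
    (x y : Γ.V) (Dx Dy : Divisor Γ) (hx : AdmissibleRep Γ D x Dx)
    (hy : AdmissibleRep Γ D y Dy) (z : Γ.Pt) (hz1 : Dx z ≠ 0) (hz2 : Dy z ≠ 0) :
    Dx = Dy := by
  obtain ⟨⟨f1, hf1⟩, p, q, hDx, hpq⟩ := hx
  obtain ⟨⟨f2, hf2⟩, p', q', hDy, hpq'⟩ := hy
  have hzx : 1 ≤ unitDiv Γ (Sum.inl x) z + unitDiv Γ p z + unitDiv Γ q z := by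
    have h1 := unit_nonneg (Sum.inl x : Γ.Pt) z
    have h2 := unit_nonneg p z
    have h3 := unit_nonneg q z
    have h4 : Dx z = unitDiv Γ (Sum.inl x) z + unitDiv Γ p z + unitDiv Γ q z := by
      rw [hDx]
    omega
  have hzy : 1 ≤ unitDiv Γ (Sum.inl y) z + unitDiv Γ p' z + unitDiv Γ q' z := by
    have h1 := unit_nonneg (Sum.inl y : Γ.Pt) z
    have h2 := unit_nonneg p' z
    have h3 := unit_nonneg q' z
    have h4 : Dy z = unitDiv Γ (Sum.inl y) z + unitDiv Γ p' z + unitDiv Γ q' z := by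
      rw [hDy]
    omega
  obtain ⟨r1, r2, hr12, hr⟩ := extract x p q z hzx hpq
  obtain ⟨r1', r2', hr12', hr'⟩ := extract y p' q' z hzy hpq'
  have h1 : ∀ w, D w = (unitDiv Γ z w + unitDiv Γ r1 w + unitDiv Γ r2 w) + ratDiv f1 w := by
    intro w
    have ha := hf1 w
    have hb : Dx w = unitDiv Γ (Sum.inl x) w + unitDiv Γ p w + unitDiv Γ q w := by rw [hDx]
    have hc := hr12 w
    omega
  have h2 : ∀ w, D w = (unitDiv Γ z w + unitDiv Γ r1' w + unitDiv Γ r2' w) + ratDiv f2 w := by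
    intro w
    have ha := hf2 w
    have hb : Dy w = unitDiv Γ (Sum.inl y) w + unitDiv Γ p' w + unitDiv Γ q' w := by rw [hDy]
    have hc := hr12' w
    omega
  have hcan := cancelLemma hV h3ec f1 f2 h1 h2 hr hr'
  funext w
  have ha : Dx w = unitDiv Γ (Sum.inl x) w + unitDiv Γ p w + unitDiv Γ q w := by rw [hDx]
  have hb : Dy w = unitDiv Γ (Sum.inl y) w + unitDiv Γ p' w + unitDiv Γ q' w := by rw [hDy]
  have hc := hr12 w
  have hd := hr12' w
  have he := hcan w
  omega

end Assembly


section DegreeZero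

variable {Γ : MetricGraphModel}

lemma edge_div_sum (h : RationalFunction Γ) (e : Γ.E) :
    ∃ bp : Finset Γ.Pt,
      (∀ z ∈ bp, ∃ (s : ℝ) (hs : 0 < s ∧ s < Γ.len e), z = Sum.inr ⟨e, ⟨s, hs⟩⟩) ∧
      (∀ (s : ℝ) (hs : 0 < s ∧ s < Γ.len e), (Sum.inr ⟨e, ⟨s, hs⟩⟩ : Γ.Pt) ∉ bp →
        ratDiv h (Sum.inr ⟨e, ⟨s, hs⟩⟩) = 0) ∧
      slopeR (h.eFun e) 0 + slopeL (h.eFun e) (Γ.len e) + ∑ z ∈ bp, ratDiv h z = 0 := by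
  classical
  obtain ⟨n, t, h0, hL, hmono, hlin⟩ := h.pl e
  choose mu hmu using hlin
  have npos : 0 < n := by
    by_contra hcon
    push_neg at hcon
    interval_cases n
    have : t (Fin.last 0) = t 0 := rfl
    rw [hL, h0] at this
    exact absurd this (ne_of_gt (Γ.len_pos e))
  set ν : ℕ → ℤ := fun j => if hj : j < n then mu ⟨j, hj⟩ else 0 with hν
  have νeq : ∀ i : Fin n, ν i.val = mu i := by
    intro i
    rw [hν]
    simp only [i.isLt, dif_pos]
  set bpFin : Finset (Fin (n + 1)) :=
    Finset.univ.filter (fun i : Fin (n + 1) => 0 < i.val ∧ i.val < n) with hbpFin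
  have hbpmem : ∀ i ∈ bpFin, 0 < i.val ∧ i.val < n := by
    intro i hi
    exact (Finset.mem_filter.mp hi).2
  have htpos : ∀ i ∈ bpFin, 0 < t i ∧ t i < Γ.len e := by
    intro i hi
    obtain ⟨h1, h2⟩ := hbpmem i hi
    constructor
    · rw [← h0]; exact hmono (by rw [Fin.lt_def]; simpa using h1)
    · rw [← hL]; exact hmono (by rw [Fin.lt_def]; simpa using h2)
  set bp : Finset Γ.Pt := bpFin.attach.image
    (fun i => Sum.inr ⟨e, ⟨t i.1, htpos i.1 i.2⟩⟩) with hbp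
  -- slope values at breakpoints
  have hsR : ∀ (i : Fin (n + 1)) (hi : i.val < n), slopeR (h.eFun e) (t i) = mu ⟨i.val, hi⟩ := by
    intro i hi
    have hcs : (⟨i.val, hi⟩ : Fin n).castSucc = i := Fin.ext rfl
    have hx := hmu ⟨i.val, hi⟩
    rw [hcs] at hx
    have hlt : t i < t ((⟨i.val, hi⟩ : Fin n).succ) := by
      apply hmono
      rw [Fin.lt_def]
      simp
    exact slopeR_eq (RLin_of_affine le_rfl hlt hx)
  have hsL : ∀ (i : Fin (n + 1)) (hi0 : 0 < i.val) (hi : i.val - 1 < n),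
      slopeL (h.eFun e) (t i) = -mu ⟨i.val - 1, hi⟩ := by
    intro i hi0 hi
    have hsu : (⟨i.val - 1, hi⟩ : Fin n).succ = i := by
      apply Fin.ext
      simp [Fin.val_succ]
      omega
    have hx := hmu ⟨i.val - 1, hi⟩
    rw [hsu] at hx
    have hlt : t ((⟨i.val - 1, hi⟩ : Fin n).castSucc) < t i := by
      apply hmono
      rw [Fin.lt_def]
      show i.val - 1 < i.val
      omega
    exact slopeL_eq (LLin_of_affine hlt le_rfl hx)
  refine ⟨bp, ?_, ?_, ?_⟩
  · intro z hz
    obtain ⟨i, _, rfl⟩ := Finset.mem_image.mp hz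
    exact ⟨t i.1, htpos i.1 i.2, rfl⟩
  · intro s hs hnot
    -- s is not a breakpoint
    have hnb : ∀ i : Fin (n + 1), t i ≠ s := by
      intro i hts
      apply hnot
      have hi : i ∈ bpFin := by
        rw [hbpFin, Finset.mem_filter]
        refine ⟨Finset.mem_univ _, ?_, ?_⟩
        · by_contra hcon
          push_neg at hcon
          have : i = 0 := by
            apply Fin.ext
            simp only [Fin.val_zero]
            omega
          rw [this, h0] at hts
          exact absurd hts.symm (ne_of_gt hs.1)
        · by_contra hcon
          push_neg at hcon
          have : i = Fin.last n := by
            apply Fin.ext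
            simp only [Fin.val_last]
            have := i.isLt
            omega
          rw [this, hL] at hts
          exact absurd hts (ne_of_gt hs.2)
      rw [hbp]
      apply Finset.mem_image.mpr
      refine ⟨⟨i, hi⟩, Finset.mem_attach _ _, ?_⟩
      have : t i = s := hts
      subst this
      rfl
    obtain ⟨i, hi1, hi2⟩ := locate hmono (x := s) (by rw [h0]; exact le_of_lt hs.1)
      (by rw [hL]; exact hs.2)
    have hi1' : t i.castSucc < s := lt_of_le_of_ne hi1 (hnb i.castSucc)
    show slopeR (h.eFun e) s + slopeL (h.eFun e) s = 0
    rw [slopeR_eq (RLin_of_affine hi1 hi2 (hmu i)),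
      slopeL_eq (LLin_of_affine hi1' (le_of_lt hi2) (hmu i))]
    ring
  · -- telescoping
    have hinj : ∀ (a : {x // x ∈ bpFin}), ∀ _ : a ∈ bpFin.attach,
        ∀ (b : {x // x ∈ bpFin}), ∀ _ : b ∈ bpFin.attach,
        (Sum.inr ⟨e, ⟨t a.1, htpos a.1 a.2⟩⟩ : Γ.Pt) = Sum.inr ⟨e, ⟨t b.1, htpos b.1 b.2⟩⟩ →
          a = b := by
      intro a _ b _ heq
      have := inr_pt_param heq
      exact Subtype.ext (hmono.injective this)
    have hsum1 : ∑ z ∈ bp, ratDiv h z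
        = ∑ i ∈ bpFin.attach, ratDiv h (Sum.inr ⟨e, ⟨t i.1, htpos i.1 i.2⟩⟩) := by
      rw [hbp, Finset.sum_image hinj]
    have hsum2 : ∑ i ∈ bpFin.attach, ratDiv h (Sum.inr ⟨e, ⟨t i.1, htpos i.1 i.2⟩⟩)
        = ∑ i ∈ bpFin, (slopeR (h.eFun e) (t i) + slopeL (h.eFun e) (t i)) := by
      calc ∑ i ∈ bpFin.attach, ratDiv h (Sum.inr ⟨e, ⟨t i.1, htpos i.1 i.2⟩⟩)
          = ∑ i ∈ bpFin.attach, (slopeR (h.eFun e) (t i.1) + slopeL (h.eFun e) (t i.1)) :=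
            Finset.sum_congr rfl (fun i _ => rfl)
        _ = ∑ i ∈ bpFin, (slopeR (h.eFun e) (t i) + slopeL (h.eFun e) (t i)) :=
            Finset.sum_attach bpFin (fun i => slopeR (h.eFun e) (t i) + slopeL (h.eFun e) (t i))
    have hval : ∀ i ∈ bpFin, (slopeR (h.eFun e) (t i) + slopeL (h.eFun e) (t i))
        = ν i.val - ν (i.val - 1) := by
      intro i hi
      obtain ⟨ha, hb⟩ := hbpmem i hi
      have hb' : i.val - 1 < n := by omega
      rw [hsR i hb, hsL i ha hb']
      have e1 : ν i.val = mu ⟨i.val, hb⟩ := νeq ⟨i.val, hb⟩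
      have e2 : ν (i.val - 1) = mu ⟨i.val - 1, hb'⟩ := νeq ⟨i.val - 1, hb'⟩
      rw [e1, e2]
      ring
    have hsum3 : ∑ i ∈ bpFin, (slopeR (h.eFun e) (t i) + slopeL (h.eFun e) (t i))
        = ∑ i ∈ bpFin, (ν i.val - ν (i.val - 1)) := Finset.sum_congr rfl hval
    have hsum4 : ∑ i ∈ bpFin, (ν i.val - ν (i.val - 1))
        = ∑ i : Fin (n + 1), (if 0 < i.val ∧ i.val < n then ν i.val - ν (i.val - 1) else 0) := by
      rw [hbpFin, Finset.sum_filter]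
    have hsum5 : ∑ i : Fin (n + 1), (if 0 < i.val ∧ i.val < n then ν i.val - ν (i.val - 1) else 0)
        = ∑ j ∈ Finset.range (n + 1), (if 0 < j ∧ j < n then ν j - ν (j - 1) else 0) :=
      Fin.sum_univ_eq_sum_range (fun j => if 0 < j ∧ j < n then ν j - ν (j - 1) else 0) (n + 1)
    set g : ℕ → ℤ := fun j => ν (min j (n - 1)) with hg
    have hstep : ∀ j ∈ Finset.range n,
        (if 0 < j + 1 ∧ j + 1 < n then ν (j + 1) - ν (j + 1 - 1) else 0) = g (j + 1) - g j := by
      intro j hj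
      rw [Finset.mem_range] at hj
      have hgj1 : g (j + 1) = ν (min (j + 1) (n - 1)) := rfl
      have hgj : g j = ν (min j (n - 1)) := rfl
      by_cases hjn : j + 1 < n
      · rw [if_pos ⟨Nat.succ_pos j, hjn⟩, hgj1, hgj]
        have h1 : min (j + 1) (n - 1) = j + 1 := by omega
        have h2 : min j (n - 1) = j := by omega
        rw [h1, h2, Nat.add_sub_cancel]
      · rw [if_neg (by omega), hgj1, hgj]
        have h1 : min (j + 1) (n - 1) = n - 1 := by omega
        have h2 : min j (n - 1) = n - 1 := by omega
        rw [h1, h2]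
        ring
    have hsum6 : ∑ j ∈ Finset.range (n + 1), (if 0 < j ∧ j < n then ν j - ν (j - 1) else 0)
        = g n - g 0 := by
      rw [Finset.sum_range_succ' (fun j => if 0 < j ∧ j < n then ν j - ν (j - 1) else 0) n]
      have hz : (if 0 < 0 ∧ 0 < n then ν 0 - ν (0 - 1) else 0) = 0 := by
        rw [if_neg (by omega)]
      rw [hz, add_zero, Finset.sum_congr rfl hstep]
      exact Finset.sum_range_sub g n
    have hX : slopeR (h.eFun e) 0 = ν 0 := by
      have hx : slopeR (h.eFun e) (t 0) = mu ⟨0, npos⟩ := hsR 0 (by simpa using npos)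
      rw [h0] at hx
      rw [hx]
      exact (νeq ⟨0, npos⟩).symm
    have hY : slopeL (h.eFun e) (Γ.len e) = -ν (n - 1) := by
      have hn1 : n - 1 < n := by omega
      have hx : slopeL (h.eFun e) (t (Fin.last n)) = -mu ⟨n - 1, hn1⟩ := by
        have := hsL (Fin.last n) (by simpa using npos) (by simpa using hn1)
        convert this using 3
        simp
      rw [hL] at hx
      rw [hx, (νeq ⟨n - 1, hn1⟩)]
    have hgn : g n = ν (n - 1) := by
      show ν (min n (n - 1)) = ν (n - 1)
      congr 1
      omega
    have hg0 : g 0 = ν 0 := by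
      show ν (min 0 (n - 1)) = ν 0
      congr 1
    rw [hsum1, hsum2, hsum3, hsum4, hsum5, hsum6, hX, hY, hgn, hg0]
    ring


lemma ratDiv_deg (h : RationalFunction Γ) :
    (Function.support (ratDiv h)).Finite ∧ (∑ᶠ z, ratDiv h z) = 0 := by
  classical
  choose bp hbp1 hbp2 hbp3 using edge_div_sum h
  set A : Finset Γ.Pt := Finset.univ.image Sum.inl with hA
  set B : Finset Γ.Pt := Finset.univ.biUnion bp with hB
  set SFin : Finset Γ.Pt := A ∪ B with hSFin
  have hsub : Function.support (ratDiv h) ⊆ ↑SFin := by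
    intro z hz
    rw [Function.mem_support] at hz
    apply Finset.mem_coe.mpr
    rcases z with v | ⟨e, s, hs1, hs2⟩
    · rw [hSFin, Finset.mem_union]
      exact Or.inl (Finset.mem_image.mpr ⟨v, Finset.mem_univ _, rfl⟩)
    · by_cases hmem : (Sum.inr ⟨e, ⟨s, hs1, hs2⟩⟩ : Γ.Pt) ∈ bp e
      · rw [hSFin, Finset.mem_union]
        exact Or.inr (Finset.mem_biUnion.mpr ⟨e, Finset.mem_univ _, hmem⟩)
      · exact absurd (hbp2 e s ⟨hs1, hs2⟩ hmem) hz
  constructor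
  · exact Set.Finite.subset SFin.finite_toSet hsub
  · rw [finsum_eq_finset_sum_of_support_subset _ hsub]
    have hdisjAB : Disjoint A B := by
      rw [Finset.disjoint_left]
      intro a haA haB
      obtain ⟨v, _, rfl⟩ := Finset.mem_image.mp haA
      obtain ⟨e, _, hmem⟩ := Finset.mem_biUnion.mp haB
      obtain ⟨s, hs, heq⟩ := hbp1 e _ hmem
      exact absurd heq (by simp)
    have hAsum : ∑ z ∈ A, ratDiv h z
        = ∑ e : Γ.E, (slopeR (h.eFun e) 0 + slopeL (h.eFun e) (Γ.len e)) := by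
      rw [hA, Finset.sum_image (by intro a _ b _ hab; exact Sum.inl.inj hab)]
      calc ∑ v : Γ.V, ratDiv h (Sum.inl v) = ∑ v : Γ.V, ∑ e : Γ.E, term h e v :=
            Finset.sum_congr rfl (fun v _ => ratDiv_vertex h v)
        _ = ∑ e : Γ.E, ∑ v : Γ.V, term h e v := Finset.sum_comm
        _ = ∑ e : Γ.E, (slopeR (h.eFun e) 0 + slopeL (h.eFun e) (Γ.len e)) := by
            apply Finset.sum_congr rfl
            intro e _
            unfold term
            rw [Finset.sum_add_distrib, Finset.sum_ite_eq, Finset.sum_ite_eq]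
            simp
    have hdisjbp : (↑(Finset.univ : Finset Γ.E) : Set Γ.E).PairwiseDisjoint bp := by
      intro e1 _ e2 _ hne
      rw [Function.onFun, Finset.disjoint_left]
      intro z hz1 hz2
      obtain ⟨s1, hs1, heq1⟩ := hbp1 e1 z hz1
      obtain ⟨s2, hs2, heq2⟩ := hbp1 e2 z hz2
      exact hne (inr_pt_edge (heq1.symm.trans heq2))
    have hBsum : ∑ z ∈ B, ratDiv h z = ∑ e : Γ.E, ∑ z ∈ bp e, ratDiv h z := by
      rw [hB]
      exact Finset.sum_biUnion hdisjbp
    rw [hSFin, Finset.sum_union hdisjAB, hAsum, hBsum, ← Finset.sum_add_distrib]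
    apply Finset.sum_eq_zero
    intro e _
    have := hbp3 e
    omega

end DegreeZero


section Decompose

variable {Γ : MetricGraphModel}

lemma unit_fin (p : Γ.Pt) : (Function.support (unitDiv Γ p)).Finite := by
  apply Set.Finite.subset (Set.finite_singleton p)
  intro z hz
  rw [Function.mem_support, unit_apply] at hz
  by_contra hcon
  rw [if_neg (by simpa using hcon)] at hz
  exact hz rfl

lemma unit_deg (p : Γ.Pt) : (∑ᶠ z, unitDiv Γ p z) = 1 := by
  rw [finsum_eq_single _ p (fun b hb => by rw [unit_apply, if_neg hb])]
  rw [unit_apply, if_pos rfl]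

lemma decompose_one (B : Divisor Γ) (heff : ∀ z, 0 ≤ B z)
    (hfin : (Function.support B).Finite) (hdeg : (∑ᶠ z, B z) = 1) :
    ∃ p, B = unitDiv Γ p := by
  classical
  set s := hfin.toFinset with hsdef
  have hss : Function.support B ⊆ ↑s := by rw [hsdef, Set.Finite.coe_toFinset]
  rw [finsum_eq_finset_sum_of_support_subset _ hss] at hdeg
  have hpos : ∀ z ∈ s, 1 ≤ B z := by
    intro z hz
    have h1 := heff z
    have h2 : B z ≠ 0 := by
      rw [hsdef, Set.Finite.mem_toFinset, Function.mem_support] at hz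
      exact hz
    omega
  have hne : s.Nonempty := by
    rw [Finset.nonempty_iff_ne_empty]
    intro hcon
    rw [hcon, Finset.sum_empty] at hdeg
    omega
  obtain ⟨p, hp⟩ := hne
  refine ⟨p, funext fun z => ?_⟩
  by_cases hz : z = p
  · subst hz
    have h1 : B z + ∑ w ∈ s.erase z, B w = 1 := by
      rw [Finset.add_sum_erase _ _ hp]
      exact hdeg
    have h2 : 0 ≤ ∑ w ∈ s.erase z, B w := Finset.sum_nonneg (fun w _ => heff w)
    have h3 : 1 ≤ B z := hpos z hp
    rw [unit_apply, if_pos rfl]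
    omega
  · rw [unit_apply, if_neg hz]
    by_contra hz0
    have hzs : z ∈ s := by
      rw [hsdef, Set.Finite.mem_toFinset, Function.mem_support]
      exact hz0
    have hsub2 : ({p, z} : Finset Γ.Pt) ⊆ s := by
      intro w hw
      rcases Finset.mem_insert.mp hw with rfl | hw
      · exact hp
      · rw [Finset.mem_singleton] at hw; subst hw; exact hzs
    have hle : B p + B z ≤ ∑ w ∈ s, B w := by
      rw [← Finset.sum_pair (fun h => hz h.symm)]
      exact Finset.sum_le_sum_of_subset_of_nonneg hsub2 (fun w _ _ => heff w)
    have := hpos z hzs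
    have := hpos p hp
    omega

lemma decompose_two (B : Divisor Γ) (heff : ∀ z, 0 ≤ B z)
    (hfin : (Function.support B).Finite) (hdeg : (∑ᶠ z, B z) = 2) :
    ∃ p q, B = fun z => unitDiv Γ p z + unitDiv Γ q z := by
  classical
  have hne : ∃ p, B p ≠ 0 := by
    by_contra hcon
    push_neg at hcon
    rw [finsum_eq_zero_of_forall_eq_zero hcon] at hdeg
    omega
  obtain ⟨p, hp⟩ := hne
  have hp1 : 1 ≤ B p := by have := heff p; omega
  set B' : Divisor Γ := fun z => B z - unitDiv Γ p z with hB'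
  have heff' : ∀ z, 0 ≤ B' z := by
    intro z
    show 0 ≤ B z - unitDiv Γ p z
    rw [unit_apply]
    split_ifs with hzp
    · subst hzp; omega
    · have := heff z; omega
  have hfin' : (Function.support B').Finite := by
    apply Set.Finite.subset (hfin.union (Set.finite_singleton p))
    intro z hz
    rw [Function.mem_support] at hz
    by_cases hzs : B z = 0
    · right
      have : B z - unitDiv Γ p z ≠ 0 := hz
      rw [hzs, unit_apply] at this
      by_contra hcon
      rw [if_neg (by simpa using hcon)] at this
      exact this rfl
    · exact Or.inl hzs
  have hdeg' : (∑ᶠ z, B' z) = 1 := by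
    have hadd := finsum_add_distrib hfin' (unit_fin p)
    have heqB : (fun z => B' z + unitDiv Γ p z) = B := by
      funext z
      show B z - unitDiv Γ p z + unitDiv Γ p z = B z
      ring
    rw [heqB] at hadd
    rw [hdeg, unit_deg] at hadd
    omega
  obtain ⟨q, hq⟩ := decompose_one B' heff' hfin' hdeg'
  refine ⟨p, q, funext fun z => ?_⟩
  have hqz := congrFun hq z
  have hbz : B' z = B z - unitDiv Γ p z := rfl
  rw [hbz] at hqz
  omega

end Decompose


section Ramp

variable {Γ : MetricGraphModel}

/-- The basic ramp function `r ↦ max (r - c) 0`. -/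
noncomputable def ramp (c : ℝ) : ℝ → ℝ := fun r => max (r - c) 0

lemma ramp_of_le {c r : ℝ} (h : c ≤ r) : ramp c r = r - c :=
  max_eq_left (by linarith)

lemma ramp_of_ge {c r : ℝ} (h : r ≤ c) : ramp c r = 0 :=
  max_eq_right (by linarith)

lemma rlin_ramp (c r : ℝ) : RLin (ramp c) r (if c ≤ r then 1 else 0) := by
  split_ifs with h
  · refine ⟨1, one_pos, fun u hu => ?_⟩
    rw [ramp_of_le h, ramp_of_le (le_trans h hu.1)]
    push_cast; ring
  · push_neg at h
    refine ⟨c - r, by linarith, fun u hu => ?_⟩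
    rw [ramp_of_ge (le_of_lt h), ramp_of_ge (by have := hu.2; linarith)]
    push_cast; ring
  
lemma llin_ramp (c r : ℝ) : LLin (ramp c) r (if c < r then -1 else 0) := by
  split_ifs with h
  · refine ⟨r - c, by linarith, fun u hu => ?_⟩
    rw [ramp_of_le (le_of_lt h), ramp_of_le (by have := hu.1; linarith)]
    push_cast; ring
  · push_neg at h
    refine ⟨1, one_pos, fun u hu => ?_⟩
    rw [ramp_of_ge h, ramp_of_ge (le_trans hu.2 h)]
    push_cast; ring

lemma PLInt_one_piece {F : ℝ → ℝ} {L : ℝ} (hL : 0 < L) (m : ℤ)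
    (hf : ∀ u ∈ Set.Icc (0 : ℝ) L, F u = F 0 + (m : ℝ) * (u - 0)) : PLInt F L := by
  refine ⟨1, ![0, L], rfl, rfl, ?_, ?_⟩
  · intro i j hij
    fin_cases i <;> fin_cases j <;> simp_all <;> linarith
  · intro i
    fin_cases i
    exact ⟨m, hf⟩

lemma PLInt_two_piece {F : ℝ → ℝ} {L c : ℝ} (h0 : 0 < c) (hcL : c < L) (m1 m2 : ℤ)
    (h1 : ∀ u ∈ Set.Icc (0 : ℝ) c, F u = F 0 + (m1 : ℝ) * (u - 0))
    (h2 : ∀ u ∈ Set.Icc c L, F u = F c + (m2 : ℝ) * (u - c)) : PLInt F L := by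
  refine ⟨2, ![0, c, L], rfl, rfl, ?_, ?_⟩
  · intro i j hij
    fin_cases i <;> fin_cases j <;> simp_all <;> linarith
  · intro i
    fin_cases i
    · exact ⟨m1, h1⟩
    · exact ⟨m2, h2⟩

lemma PLInt_ramp {c L : ℝ} (hL : 0 < L) (h0 : 0 ≤ c) (hcL : c ≤ L) :
    PLInt (ramp c) L := by
  rcases eq_or_lt_of_le h0 with h0' | h0'
  · refine PLInt_one_piece hL 1 (fun u hu => ?_)
    rw [ramp_of_le (by rw [← h0']; exact hu.1), ramp_of_le (le_of_eq h0'.symm)]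
    push_cast; ring
  rcases eq_or_lt_of_le hcL with hcL' | hcL'
  · refine PLInt_one_piece hL 0 (fun u hu => ?_)
    rw [ramp_of_ge (by rw [hcL']; exact hu.2), ramp_of_ge (by rw [hcL']; exact le_of_lt hL)]
    push_cast; ring
  · refine PLInt_two_piece h0' hcL' 0 1 (fun u hu => ?_) (fun u hu => ?_)
    · rw [ramp_of_ge hu.2, ramp_of_ge (le_of_lt h0')]
      push_cast; ring
    · rw [ramp_of_le hu.1, ramp_of_le le_rfl]
      push_cast; ring

lemma ramp_slope_sum (c r : ℝ) :
    (if c ≤ r then (1 : ℤ) else 0) + (if c < r then -1 else 0) = (if r = c then 1 else 0) := by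
  rcases lt_trichotomy c r with h | h | h
  · rw [if_pos (le_of_lt h), if_pos h, if_neg (ne_of_gt h)]; ring
  · rw [if_pos (le_of_eq h), if_neg (by rw [h]; exact lt_irrefl r), if_pos h.symm]; ring
  · rw [if_neg (not_le.mpr h), if_neg (by linarith), if_neg (by intro hc; rw [hc] at h; exact lt_irrefl c h)]
    ring

end Ramp

section RFMod

variable {Γ : MetricGraphModel}

/-- Modify a rational function on a single edge by adding `W`. -/
noncomputable def RFmod (f : RationalFunction Γ) (e0 : Γ.E) (W : ℝ → ℝ)
    (hWpl : PLInt (fun r => f.eFun e0 r + W r) (Γ.len e0))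
    (hW0 : W 0 = 0) (hWL : W (Γ.len e0) = 0) : RationalFunction Γ where
  vVal := f.vVal
  eFun := fun e => if h : e = e0 then (fun r => f.eFun e0 r + W r) else f.eFun e
  pl := fun e => by
    by_cases he : e = e0
    · subst he
      show PLInt (if h : e = e then (fun r => f.eFun e r + W r) else f.eFun e) (Γ.len e)
      rw [dif_pos rfl]
      exact hWpl
    · show PLInt (if h : e = e0 then (fun r => f.eFun e0 r + W r) else f.eFun e) (Γ.len e)
      rw [dif_neg he]
      exact f.pl e
  srcVal := fun e => by
    by_cases he : e = e0
    · subst he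
      show (if h : e = e then (fun r => f.eFun e r + W r) else f.eFun e) 0 = f.vVal (Γ.src e)
      rw [dif_pos rfl]
      show f.eFun e 0 + W 0 = f.vVal (Γ.src e)
      rw [hW0, add_zero, f.srcVal]
    · show (if h : e = e0 then (fun r => f.eFun e0 r + W r) else f.eFun e) 0 = f.vVal (Γ.src e)
      rw [dif_neg he]
      exact f.srcVal e
  tgtVal := fun e => by
    by_cases he : e = e0
    · subst he
      show (if h : e = e then (fun r => f.eFun e r + W r) else f.eFun e) (Γ.len e)
        = f.vVal (Γ.tgt e)
      rw [dif_pos rfl]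
      show f.eFun e (Γ.len e) + W (Γ.len e) = f.vVal (Γ.tgt e)
      rw [hWL, add_zero, f.tgtVal]
    · show (if h : e = e0 then (fun r => f.eFun e0 r + W r) else f.eFun e) (Γ.len e)
        = f.vVal (Γ.tgt e)
      rw [dif_neg he]
      exact f.tgtVal e

lemma ratDiv_mod (f : RationalFunction Γ) (e0 : Γ.E) (W : ℝ → ℝ)
    (hWpl : PLInt (fun r => f.eFun e0 r + W r) (Γ.len e0))
    (hW0 : W 0 = 0) (hWL : W (Γ.len e0) = 0)
    (mR mL : ℝ → ℤ) (hmR : ∀ r, RLin W r (mR r)) (hmL : ∀ r, LLin W r (mL r)) :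
    (∀ (sx : ℝ) (hs : 0 < sx ∧ sx < Γ.len e0),
      ratDiv (RFmod f e0 W hWpl hW0 hWL) (Sum.inr ⟨e0, ⟨sx, hs⟩⟩)
        = ratDiv f (Sum.inr ⟨e0, ⟨sx, hs⟩⟩) + mR sx + mL sx) ∧
    (∀ (e : Γ.E) (_ : e ≠ e0) (sx : ℝ) (hs : 0 < sx ∧ sx < Γ.len e),
      ratDiv (RFmod f e0 W hWpl hW0 hWL) (Sum.inr ⟨e, ⟨sx, hs⟩⟩)
        = ratDiv f (Sum.inr ⟨e, ⟨sx, hs⟩⟩)) ∧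
    (∀ v : Γ.V, ratDiv (RFmod f e0 W hWpl hW0 hWL) (Sum.inl v)
        = ratDiv f (Sum.inl v) + (if Γ.src e0 = v then mR 0 else 0)
          + (if Γ.tgt e0 = v then mL (Γ.len e0) else 0)) := by
  set fm := RFmod f e0 W hWpl hW0 hWL with hfm
  have heF : fm.eFun e0 = fun r => f.eFun e0 r + W r := by
    show (if h : e0 = e0 then (fun r => f.eFun e0 r + W r) else f.eFun e0) = _
    rw [dif_pos rfl]
  have heO : ∀ e : Γ.E, e ≠ e0 → fm.eFun e = f.eFun e := by
    intro e he
    show (if h : e = e0 then (fun r => f.eFun e0 r + W r) else f.eFun e) = _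
    rw [dif_neg he]
  have hslR : ∀ (r : ℝ), 0 ≤ r → r < Γ.len e0 →
      slopeR (fm.eFun e0) r = slopeR (f.eFun e0) r + mR r := by
    intro r h0 h1
    obtain ⟨m1, hm1⟩ := exists_RLin (f.pl e0) h0 h1
    rw [heF, slopeR_eq (hm1.add (hmR r)), slopeR_eq hm1]
  have hslL : ∀ (r : ℝ), 0 < r → r ≤ Γ.len e0 →
      slopeL (fm.eFun e0) r = slopeL (f.eFun e0) r + mL r := by
    intro r h0 h1
    obtain ⟨m1, hm1⟩ := exists_LLin (f.pl e0) h0 h1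
    rw [heF, slopeL_eq (hm1.add (hmL r)), slopeL_eq hm1]
  refine ⟨?_, ?_, ?_⟩
  · intro sx hs
    show slopeR (fm.eFun e0) sx + slopeL (fm.eFun e0) sx
      = (slopeR (f.eFun e0) sx + slopeL (f.eFun e0) sx) + mR sx + mL sx
    rw [hslR sx (le_of_lt hs.1) hs.2, hslL sx hs.1 (le_of_lt hs.2)]
    ring
  · intro e he sx hs
    show slopeR (fm.eFun e) sx + slopeL (fm.eFun e) sx
      = slopeR (f.eFun e) sx + slopeL (f.eFun e) sx
    rw [heO e he]
  · intro v
    rw [ratDiv_vertex, ratDiv_vertex]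
    have hterm : ∀ e : Γ.E, term fm e v = term f e v +
        (if e = e0 then ((if Γ.src e0 = v then mR 0 else 0)
          + (if Γ.tgt e0 = v then mL (Γ.len e0) else 0)) else 0) := by
      intro e
      by_cases he : e = e0
      · subst he
        unfold term
        rw [if_pos rfl, hslR 0 le_rfl (Γ.len_pos e), hslL (Γ.len e) (Γ.len_pos e) le_rfl]
        split_ifs <;> ring
      · unfold term
        rw [if_neg he, heO e he]
        ring
    rw [Finset.sum_congr rfl (fun e _ => hterm e), Finset.sum_add_distrib,
      Finset.sum_ite_eq' Finset.univ e0 (fun _ => (if Γ.src e0 = v then mR 0 else 0)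
        + (if Γ.tgt e0 = v then mL (Γ.len e0) else 0))]
    simp only [Finset.mem_univ, if_true]
    ring

end RFMod


section Slide

variable {Γ : MetricGraphModel}

lemma not_same_inl' (p : Γ.Pt) (x : Γ.V) : ¬ SameEdgeInterior Γ p (Sum.inl x) := by
  rintro ⟨e, _, ⟨q', heq⟩⟩
  exact absurd heq (by simp)

lemma unit_inr_inr (e : Γ.E) {c r : ℝ} (hc : 0 < c ∧ c < Γ.len e) (hr : 0 < r ∧ r < Γ.len e) :
    unitDiv Γ (Sum.inr ⟨e, ⟨c, hc⟩⟩) (Sum.inr ⟨e, ⟨r, hr⟩⟩) = if r = c then 1 else 0 := by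
  rw [unit_apply]
  by_cases h : r = c
  · subst h
    rw [if_pos rfl, if_pos rfl]
  · rw [if_neg (fun hcon => h (inr_pt_param hcon)), if_neg h]

lemma unit_inr_inl (e : Γ.E) {c : ℝ} (hc : 0 < c ∧ c < Γ.len e) (v : Γ.V) :
    unitDiv Γ (Sum.inr ⟨e, ⟨c, hc⟩⟩) (Sum.inl v) = 0 := by
  rw [unit_apply, if_neg (by simp)]

lemma unit_inr_other {e e' : Γ.E} (hne : e' ≠ e) {c r : ℝ} (hc : 0 < c ∧ c < Γ.len e)
    (hr : 0 < r ∧ r < Γ.len e') :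
    unitDiv Γ (Sum.inr ⟨e, ⟨c, hc⟩⟩) (Sum.inr ⟨e', ⟨r, hr⟩⟩) = 0 := by
  rw [unit_apply, if_neg (fun hcon => hne (inr_pt_edge hcon))]

lemma unit_inl_inr (x : Γ.V) (e : Γ.E) {r : ℝ} (hr : 0 < r ∧ r < Γ.len e) :
    unitDiv Γ (Sum.inl x) (Sum.inr ⟨e, ⟨r, hr⟩⟩) = 0 := by
  rw [unit_apply, if_neg (by simp)]

lemma unit_inl_inl (x v : Γ.V) :
    unitDiv Γ (Sum.inl x) (Sum.inl v) = if x = v then 1 else 0 := by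
  rw [unit_apply]
  by_cases h : x = v
  · rw [if_pos (by rw [h]), if_pos h]
  · rw [if_neg (fun hcon => h (Sum.inl.inj hcon).symm), if_neg h]

lemma slide (D : Divisor Γ) (x : Γ.V) (e : Γ.E) (sx tx : ℝ)
    (hs : 0 < sx ∧ sx < Γ.len e) (ht : 0 < tx ∧ tx < Γ.len e) (hst : sx ≤ tx)
    (f : RationalFunction Γ)
    (hf : ∀ w, D w = unitDiv Γ (Sum.inl x) w + unitDiv Γ (Sum.inr ⟨e, ⟨sx, hs⟩⟩) w
      + unitDiv Γ (Sum.inr ⟨e, ⟨tx, ht⟩⟩) w + ratDiv f w) :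
    ∃ Dx, AdmissibleRep Γ D x Dx := by
  classical
  have hLpos : 0 < Γ.len e := Γ.len_pos e
  set δ := min sx (Γ.len e - tx) with hδ
  have hδpos : 0 < δ := lt_min hs.1 (by linarith [ht.2])
  have hδs : δ ≤ sx := min_le_left _ _
  have hδt : δ ≤ Γ.len e - tx := min_le_right _ _
  set a := sx - δ with ha
  set d := tx + δ with hd
  have ha0 : 0 ≤ a := by rw [ha]; linarith
  have hdL : d ≤ Γ.len e := by rw [hd]; linarith
  have haor : a = 0 ∨ d = Γ.len e := by
    rcases min_cases sx (Γ.len e - tx) with ⟨h1, _⟩ | ⟨h1, _⟩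
    · left; rw [ha, hδ, h1]; ring
    · right; rw [hd, hδ, h1]; ring
  have halt : a < sx := by rw [ha]; linarith
  have hdgt : tx < d := by rw [hd]; linarith
  have haL : a < Γ.len e := lt_trans halt hs.2
  have hd0 : 0 < d := lt_of_le_of_lt (le_of_lt hs.1) (by linarith)
  have hasd : a + d = sx + tx := by rw [ha, hd]; ring
  set p' : Γ.Pt := if h : 0 < a then Sum.inr ⟨e, ⟨a, h, haL⟩⟩ else Sum.inl (Γ.src e) with hp'
  set q' : Γ.Pt := if h : d < Γ.len e then Sum.inr ⟨e, ⟨d, hd0, h⟩⟩ else Sum.inl (Γ.tgt e)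
    with hq'
  have hW0 : (fun r => ramp sx r + ramp tx r - ramp a r - ramp d r) 0 = 0 := by
    show ramp sx 0 + ramp tx 0 - ramp a 0 - ramp d 0 = 0
    rw [ramp_of_ge ha0, ramp_of_ge (le_of_lt hs.1), ramp_of_ge (le_of_lt ht.1),
      ramp_of_ge (le_of_lt hd0)]
    ring
  have hWL : (fun r => ramp sx r + ramp tx r - ramp a r - ramp d r) (Γ.len e) = 0 := by
    show ramp sx (Γ.len e) + ramp tx (Γ.len e) - ramp a (Γ.len e) - ramp d (Γ.len e) = 0
    rw [ramp_of_le (le_of_lt haL), ramp_of_le (le_of_lt hs.2), ramp_of_le (le_of_lt ht.2),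
      ramp_of_le hdL]
    linarith
  have hWpl : PLInt (fun r => f.eFun e r
      + (fun r => ramp sx r + ramp tx r - ramp a r - ramp d r) r) (Γ.len e) :=
    PLInt_add (f.pl e)
      (PLInt_sub
        (PLInt_sub (PLInt_add (PLInt_ramp hLpos (le_of_lt hs.1) (le_of_lt hs.2))
          (PLInt_ramp hLpos (le_of_lt ht.1) (le_of_lt ht.2)))
          (PLInt_ramp hLpos ha0 (le_of_lt haL)))
        (PLInt_ramp hLpos (le_of_lt hd0) hdL))
  have hmR : ∀ r, RLin (fun r => ramp sx r + ramp tx r - ramp a r - ramp d r) r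
      ((if sx ≤ r then 1 else 0) + (if tx ≤ r then 1 else 0) - (if a ≤ r then 1 else 0)
        - (if d ≤ r then 1 else 0)) :=
    fun r => ((((rlin_ramp sx r).add (rlin_ramp tx r)).sub' (rlin_ramp a r)).sub'
      (rlin_ramp d r))
  have hmL : ∀ r, LLin (fun r => ramp sx r + ramp tx r - ramp a r - ramp d r) r
      ((if sx < r then (-1 : ℤ) else 0) + (if tx < r then (-1 : ℤ) else 0)
        - (if a < r then (-1 : ℤ) else 0) - (if d < r then (-1 : ℤ) else 0)) :=
    fun r => ((((llin_ramp sx r).add (llin_ramp tx r)).sub' (llin_ramp a r)).sub'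
      (llin_ramp d r))
  obtain ⟨hint, hoth, hver⟩ := ratDiv_mod f e _ hWpl hW0 hWL _ _ hmR hmL
  set fm := RFmod f e _ hWpl hW0 hWL with hfm
  -- the key pointwise identity
  have hkey : ∀ w, ratDiv fm w = ratDiv f w
      + unitDiv Γ (Sum.inr ⟨e, ⟨sx, hs⟩⟩) w + unitDiv Γ (Sum.inr ⟨e, ⟨tx, ht⟩⟩) w
      - unitDiv Γ p' w - unitDiv Γ q' w := by
    intro w
    rcases w with v | ⟨e', r, hr⟩
    · -- vertex
      have hv := hver v
      have hmr0 : ((if sx ≤ (0:ℝ) then (1:ℤ) else 0) + (if tx ≤ (0:ℝ) then 1 else 0)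
          - (if a ≤ (0:ℝ) then 1 else 0) - (if d ≤ (0:ℝ) then 1 else 0))
          = (if 0 < a then 0 else -1) := by
        rw [if_neg (not_le.mpr hs.1), if_neg (not_le.mpr ht.1), if_neg (not_le.mpr hd0)]
        by_cases hc : 0 < a
        · rw [if_neg (not_le.mpr hc), if_pos hc]; ring
        · rw [if_pos (by push_neg at hc; linarith), if_neg hc]; ring
      have hmlL : ((if sx < Γ.len e then (-1:ℤ) else 0) + (if tx < Γ.len e then (-1:ℤ) else 0)
          - (if a < Γ.len e then (-1:ℤ) else 0) - (if d < Γ.len e then (-1:ℤ) else 0))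
          = (if d < Γ.len e then 0 else -1) := by
        rw [if_pos haL, if_pos hs.2, if_pos ht.2]
        by_cases hc : d < Γ.len e
        · rw [if_pos hc, if_pos hc]; ring
        · rw [if_neg hc, if_neg hc]; ring
      rw [hmr0, hmlL] at hv
      have hup' : unitDiv Γ p' (Sum.inl v)
          = if 0 < a then 0 else (if Γ.src e = v then 1 else 0) := by
        by_cases hc : 0 < a
        · rw [hp', dif_pos hc, if_pos hc]
          exact unit_inr_inl e _ v
        · rw [hp', dif_neg hc, if_neg hc, unit_inl_inl]
      have huq' : unitDiv Γ q' (Sum.inl v)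
          = if d < Γ.len e then 0 else (if Γ.tgt e = v then 1 else 0) := by
        by_cases hc : d < Γ.len e
        · rw [hq', dif_pos hc, if_pos hc]
          exact unit_inr_inl e _ v
        · rw [hq', dif_neg hc, if_neg hc, unit_inl_inl]
      rw [hv, hup', huq', unit_inr_inl, unit_inr_inl]
      split_ifs <;> ring
    · by_cases he' : e' = e
      · subst he'
        have hi := hint r hr
        have hu1 : unitDiv Γ (Sum.inr ⟨e', ⟨sx, hs⟩⟩) (Sum.inr ⟨e', ⟨r, hr⟩⟩)
            = if r = sx then 1 else 0 := unit_inr_inr e' hs hr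
        have hu2 : unitDiv Γ (Sum.inr ⟨e', ⟨tx, ht⟩⟩) (Sum.inr ⟨e', ⟨r, hr⟩⟩)
            = if r = tx then 1 else 0 := unit_inr_inr e' ht hr
        have hup' : unitDiv Γ p' (Sum.inr ⟨e', ⟨r, hr⟩⟩) = if r = a then 1 else 0 := by
          by_cases hc : 0 < a
          · rw [hp', dif_pos hc]
            exact unit_inr_inr e' ⟨hc, haL⟩ hr
          · rw [hp', dif_neg hc, unit_inl_inr]
            push_neg at hc
            have haz : a = 0 := le_antisymm hc ha0
            rw [if_neg (by rw [haz]; exact ne_of_gt hr.1)]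
        have huq' : unitDiv Γ q' (Sum.inr ⟨e', ⟨r, hr⟩⟩) = if r = d then 1 else 0 := by
          by_cases hc : d < Γ.len e'
          · rw [hq', dif_pos hc]
            exact unit_inr_inr e' ⟨hd0, hc⟩ hr
          · rw [hq', dif_neg hc, unit_inl_inr]
            push_neg at hc
            have hdz : d = Γ.len e' := le_antisymm hdL hc
            rw [if_neg (by rw [hdz]; exact ne_of_lt hr.2)]
        have hra := ramp_slope_sum a r
        have hrs := ramp_slope_sum sx r
        have hrt := ramp_slope_sum tx r
        have hrd := ramp_slope_sum d r
        rw [hi, hu1, hu2, hup', huq']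
        omega
      · have ho := hoth e' he' r hr
        have hu1 : unitDiv Γ (Sum.inr ⟨e, ⟨sx, hs⟩⟩) (Sum.inr ⟨e', ⟨r, hr⟩⟩) = 0 :=
          unit_inr_other he' hs hr
        have hu2 : unitDiv Γ (Sum.inr ⟨e, ⟨tx, ht⟩⟩) (Sum.inr ⟨e', ⟨r, hr⟩⟩) = 0 :=
          unit_inr_other he' ht hr
        have hup' : unitDiv Γ p' (Sum.inr ⟨e', ⟨r, hr⟩⟩) = 0 := by
          by_cases hc : 0 < a
          · rw [hp', dif_pos hc]
            exact unit_inr_other he' _ hr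
          · rw [hp', dif_neg hc, unit_inl_inr]
        have huq' : unitDiv Γ q' (Sum.inr ⟨e', ⟨r, hr⟩⟩) = 0 := by
          by_cases hc : d < Γ.len e
          · rw [hq', dif_pos hc]
            exact unit_inr_other he' _ hr
          · rw [hq', dif_neg hc, unit_inl_inr]
        rw [ho, hu1, hu2, hup', huq']
        ring
  refine ⟨fun w => unitDiv Γ (Sum.inl x) w + unitDiv Γ p' w + unitDiv Γ q' w,
    ⟨fm, fun w => ?_⟩, p', q', rfl, ?_⟩
  · show D w = (unitDiv Γ (Sum.inl x) w + unitDiv Γ p' w + unitDiv Γ q' w) + ratDiv fm w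
    have h1 := hf w
    have h2 := hkey w
    omega
  · rcases haor with hz | hz
    · have : p' = Sum.inl (Γ.src e) := by
        rw [hp', dif_neg (by rw [hz]; exact lt_irrefl 0)]
      rw [this]
      exact not_same_inl (Γ.src e) q'
    · have : q' = Sum.inl (Γ.tgt e) := by
        rw [hq', dif_neg (by rw [hz]; exact lt_irrefl _)]
      rw [this]
      exact not_same_inl' p' (Γ.tgt e)

end Slide


section Existence

variable {Γ : MetricGraphModel}

lemma step1 (D : Divisor Γ) (hfin : DivFinSupp D) (hdeg : divDegree D = 3)
    (hrk : RankGE Γ D 1) (x : Γ.V) :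
    ∃ (p q : Γ.Pt) (f : RationalFunction Γ),
      ∀ w, D w = unitDiv Γ (Sum.inl x) w + unitDiv Γ p w + unitDiv Γ q w + ratDiv f w := by
  have hAeff : DivEffective (unitDiv Γ (Sum.inl x)) := fun z => unit_nonneg _ z
  have hAfin : DivFinSupp (unitDiv Γ (Sum.inl x)) := unit_fin _
  have hAdeg : divDegree (unitDiv Γ (Sum.inl x)) = 1 := unit_deg _
  obtain ⟨B, hBeff, hBfin, f, hf⟩ := hrk _ hAeff hAfin hAdeg
  obtain ⟨hdfin, hdzero⟩ := ratDiv_deg f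
  have hBdeg : (∑ᶠ z, B z) = 2 := by
    have h1 : (fun w => D w - unitDiv Γ (Sum.inl x) w) = fun w => B w + ratDiv f w :=
      funext hf
    have h2 : (∑ᶠ w, (D w - unitDiv Γ (Sum.inl x) w)) = ∑ᶠ w, (B w + ratDiv f w) := by
      rw [h1]
    rw [finsum_sub_distrib hfin hAfin, finsum_add_distrib hBfin hdfin, hdzero] at h2
    have h5 : (∑ᶠ w, D w) = 3 := hdeg
    have h6 : (∑ᶠ w, unitDiv Γ (Sum.inl x) w) = 1 := unit_deg _
    omega
  obtain ⟨p, q, hpq⟩ := decompose_two B hBeff hBfin hBdeg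
  refine ⟨p, q, f, fun w => ?_⟩
  have h1 : D w - unitDiv Γ (Sum.inl x) w = B w + ratDiv f w := hf w
  have h2 : B w = unitDiv Γ p w + unitDiv Γ q w := by rw [hpq]
  omega

lemma adm_exists (D : Divisor Γ) (hfin : DivFinSupp D) (hdeg : divDegree D = 3)
    (hrk : RankGE Γ D 1) (x : Γ.V) : ∃ Dx, AdmissibleRep Γ D x Dx := by
  obtain ⟨p, q, f, hf⟩ := step1 D hfin hdeg hrk x
  by_cases hpq : SameEdgeInterior Γ p q
  · obtain ⟨e, ⟨sp, hpe⟩, ⟨sq, hqe⟩⟩ := hpq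
    subst hpe
    subst hqe
    obtain ⟨sxv, hsxv⟩ := sp
    obtain ⟨sqv, hsqv⟩ := sq
    rcases le_total sxv sqv with hle | hle
    · exact slide D x e sxv sqv hsxv hsqv hle f hf
    · apply slide D x e sqv sxv hsqv hsxv hle f
      intro w
      have := hf w
      omega
  · refine ⟨fun w => unitDiv Γ (Sum.inl x) w + unitDiv Γ p w + unitDiv Γ q w,
      ⟨f, fun w => ?_⟩, p, q, rfl, hpq⟩
    show D w = (unitDiv Γ (Sum.inl x) w + unitDiv Γ p w + unitDiv Γ q w) + ratDiv f w
    have := hf w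
    omega

lemma adm_at_x {D : Divisor Γ} {x : Γ.V} {Dx : Divisor Γ}
    (hx : AdmissibleRep Γ D x Dx) : Dx (Sum.inl x) ≠ 0 := by
  obtain ⟨_, p, q, hDx, _⟩ := hx
  have h1 : Dx (Sum.inl x) = unitDiv Γ (Sum.inl x) (Sum.inl x)
      + unitDiv Γ p (Sum.inl x) + unitDiv Γ q (Sum.inl x) := by rw [hDx]
  have h2 : unitDiv Γ (Sum.inl x) (Sum.inl x) = 1 := by rw [unit_apply, if_pos rfl]
  have h3 := unit_nonneg p (Sum.inl x : Γ.Pt)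
  have h4 := unit_nonneg q (Sum.inl x : Γ.Pt)
  omega

end Existence

end AdmAux

/-- On a `3`-edge connected metric graph, every divisor `D`
of degree `3` and rank at least `1` has a unique admissible representative
with respect to each vertex of the canonical model, and any two distinct
admissible representatives of `D` have disjoint supports. -/
theorem admissible_representatives_unique
    (Γ : MetricGraphModel) (hcan : Γ.IsCanonical) (h3ec : Γ.ThreeEdgeConnected)
    (D : MetricGraphModel.Divisor Γ) (hfin : MetricGraphModel.DivFinSupp D)
    (hdeg : MetricGraphModel.divDegree D = 3) (hrk : MetricGraphModel.RankGE Γ D 1) :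
    (∀ x : Γ.V, ∃! Dx : MetricGraphModel.Divisor Γ, AdmissibleRep Γ D x Dx) ∧
    (∀ (x y : Γ.V) (Dx Dy : MetricGraphModel.Divisor Γ),
      AdmissibleRep Γ D x Dx → AdmissibleRep Γ D y Dy → Dx ≠ Dy →
        Disjoint (Function.support Dx) (Function.support Dy)) := by
  have hV : Nonempty Γ.V := hcan.1.1
  constructor
  · intro x
    obtain ⟨Dx, hDx⟩ := AdmAux.adm_exists D hfin hdeg hrk x
    refine ⟨Dx, hDx, fun Dy hDy => ?_⟩
    exact AdmAux.adm_unique hV h3ec D x x Dy Dx hDy hDx (Sum.inl x)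
      (AdmAux.adm_at_x hDy) (AdmAux.adm_at_x hDx)
  · intro x y Dx Dy hx hy hne
    rw [Set.disjoint_left]
    intro z hz1 hz2
    exact hne (AdmAux.adm_unique hV h3ec D x y Dx Dy hx hy z hz1 hz2)
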